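/- arXiv:1312.0669 — 6 statements merged into one kernel-verified Lean document; each statement's English description precedes it below -/
import Mathlib

section
/- Let X and Y be Hausdorff topological spaces, f : X → X and g : Y → Y perfect mappings. If there exists a perfect continuous surjection h : X → Y such that h ∘ f = g ∘ h, then c(f) ≥ c(g). Consequently, if h is moreover a homeomorphism (a topological conjugation), then c(f) = c(g). -/
open Set Filter Topology ENNReal

section Defs

variable {X Y : Type*}

/-- An open set with compact complement. -/
def IsCoCompactOpen [TopologicalSpace X] (U : Set X) : Prop :=
  IsOpen U ∧ IsCompact Uᶜ

/-- A co-compact open cover: every member is co-compact open, and the family covers `X`. -/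
def IsCoCompactCover [TopologicalSpace X] (𝒰 : Set (Set X)) : Prop :=
  (∀ U ∈ 𝒰, IsCoCompactOpen U) ∧ ⋃₀ 𝒰 = Set.univ

/-- A perfect map: continuous, closed, with compact fibers. -/
def IsPerfectMap [TopologicalSpace X] [TopologicalSpace Y] (f : X → Y) : Prop :=
  Continuous f ∧ IsClosedMap f ∧ ∀ y : Y, IsCompact (f ⁻¹' {y})

/-- `coverN 𝒰` : the minimal cardinality of a finite subcover of `𝒰`. -/
noncomputable def coverN (𝒰 : Set (Set X)) : ℕ :=
  sInf {n | ∃ 𝒱 : Finset (Set X), ↑𝒱 ⊆ 𝒰 ∧ ⋃₀ (𝒱 : Set (Set X)) = Set.univ ∧ 𝒱.card = n}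

/-- `H(𝒰) = log N(𝒰)`, as a real number. -/
noncomputable def covHR (𝒰 : Set (Set X)) : ℝ :=
  Real.log (coverN 𝒰)

/-- `H(𝒰) = log N(𝒰)`, as an extended nonnegative real. -/
noncomputable def covH (𝒰 : Set (Set X)) : ℝ≥0∞ :=
  ENNReal.ofReal (Real.log (coverN 𝒰))

/-- The join `𝒰 ∨ 𝒱 = {U ∩ V : U ∈ 𝒰, V ∈ 𝒱}` of two covers. -/
def covJoin (𝒰 𝒱 : Set (Set X)) : Set (Set X) :=
  Set.image2 (· ∩ ·) 𝒰 𝒱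

/-- The preimage cover `f⁻¹(𝒰) = {f⁻¹(U) : U ∈ 𝒰}`. -/
def preimCover (f : X → Y) (𝒰 : Set (Set Y)) : Set (Set X) :=
  (fun U => f ⁻¹' U) '' 𝒰

/-- The iterated join `⋁_{i=0}^{n-1} f⁻ⁱ(𝒰)`. -/
def iterJoin (f : X → X) (𝒰 : Set (Set X)) (n : ℕ) : Set (Set X) :=
  {W | ∃ u : Fin n → Set X, (∀ i, u i ∈ 𝒰) ∧ W = ⋂ i : Fin n, f^[(i : ℕ)] ⁻¹' u i}

/-- The co-compact entropy of `f` relative to the cover `𝒰`: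
`c(f,𝒰) = lim_n (1/n) H(⋁_{i=0}^{n-1} f⁻ⁱ(𝒰))` (realized as a `limsup`). -/
noncomputable def cEntCover (f : X → X) (𝒰 : Set (Set X)) : ℝ≥0∞ :=
  Filter.atTop.limsup fun n : ℕ => covH (iterJoin f 𝒰 n) / (n : ℝ≥0∞)

/-- The co-compact entropy `c(f) = sup_𝒰 c(f,𝒰)` over all co-compact open covers. -/
noncomputable def cEnt [TopologicalSpace X] (f : X → X) : ℝ≥0∞ :=
  ⨆ (𝒰 : Set (Set X)) (_ : IsCoCompactCover 𝒰), cEntCover f 𝒰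

end Defs

section MetricDefs

variable {X : Type*}

/-- `E` is `(n,ε)`-separated for `f` w.r.t. the distance function `d`. -/
def IsNSepSet (d : X → X → ℝ) (f : X → X) (n : ℕ) (ε : ℝ) (E : Set X) : Prop :=
  ∀ x ∈ E, ∀ y ∈ E, x ≠ y → ∃ j < n, ε < d (f^[j] x) (f^[j] y)

/-- `s_n(ε,K,f)`: the maximal cardinality of an `(n,ε)`-separated subset of `K`. -/
noncomputable def sepCard (d : X → X → ℝ) (f : X → X) (n : ℕ) (ε : ℝ) (K : Set X) : ℝ≥0∞ :=
  ⨆ (E : Finset X) (_ : ↑E ⊆ K ∧ IsNSepSet d f n ε ↑E), (E.card : ℝ≥0∞)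

/-- Logarithm on `ℝ≥0∞`, with `elog ⊤ = ⊤`, truncated at `0` below. -/
noncomputable def elog (x : ℝ≥0∞) : ℝ≥0∞ :=
  if x = ⊤ then ⊤ else ENNReal.ofReal (Real.log x.toReal)

/-- `s(ε,K,f) = limsup_n (1/n) log s_n(ε,K,f)`. -/
noncomputable def sepEntEps (d : X → X → ℝ) (f : X → X) (ε : ℝ) (K : Set X) : ℝ≥0∞ :=
  Filter.atTop.limsup fun n : ℕ => elog (sepCard d f n ε K) / (n : ℝ≥0∞)

/-- `s(K,f) = lim_{ε→0} s(ε,K,f)` (the limit of the monotone family, i.e. the supremum). -/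
noncomputable def sepEnt (d : X → X → ℝ) (f : X → X) (K : Set X) : ℝ≥0∞ :=
  ⨆ (ε : ℝ) (_ : 0 < ε), sepEntEps d f ε K

/-- Bowen's entropy `h_d(f) = sup_K s(K,f)`, supremum over compact subsets. -/
noncomputable def bowenEnt [TopologicalSpace X] (d : X → X → ℝ) (f : X → X) : ℝ≥0∞ :=
  ⨆ (K : Set X) (_ : IsCompact K), sepEnt d f K

/-- The `d`-entropy `h^d(f) = s(X,f)`. -/
noncomputable def dEnt (d : X → X → ℝ) (f : X → X) : ℝ≥0∞ :=
  sepEnt d f Set.univ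

/-- A metric space structure on `X` is of compact type (relative to the ambient topology on
`X`) if it extends to a metric on the one-point compactification `OnePoint X` inducing the
topology of `OnePoint X`. -/
def IsCompactTypeMetric [TopologicalSpace X] (m : MetricSpace X) : Prop :=
  ∃ mc : MetricSpace (OnePoint X),
    mc.toUniformSpace.toTopologicalSpace = (inferInstance : TopologicalSpace (OnePoint X)) ∧
    ∀ x y : X, mc.dist ↑x ↑y = m.dist x y

/-- The extension of `f : X → X` to the one-point compactification, fixing `∞`. -/
def onePointExtend (f : X → X) : OnePoint X → OnePoint X :=
  fun p => Option.rec OnePoint.infty (fun x => (↑(f x) : OnePoint X)) p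

end MetricDefs

section MeasureDefs

open MeasureTheory

variable {X : Type*}

/-- A finite Borel partition of `X`. -/
def IsFinBorelPartition [MeasurableSpace X] (P : Finset (Set X)) : Prop :=
  (∀ A ∈ P, MeasurableSet A) ∧ ⋃₀ (P : Set (Set X)) = Set.univ ∧
    ∀ A ∈ P, ∀ B ∈ P, A ≠ B → A ∩ B = ∅

/-- `φ(x) = -x log x` (with `φ(0) = 0`). -/
noncomputable def phiEnt (x : ℝ) : ℝ := -(x * Real.log x)

/-- `H_μ(⋁_{i=0}^{n-1} f⁻ⁱ𝒜) = Σ_{B} φ(μ(B))`, the sum over the cells of the iterated join of the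
partition `P` (cells indexed by tuples of members of `P`; repeated empty cells contribute `0`). -/
noncomputable def partEntSum [MeasurableSpace X] (μ : Measure X) (f : X → X)
    (P : Finset (Set X)) (n : ℕ) : ℝ :=
  ∑ u : Fin n → {A // A ∈ P}, phiEnt ((μ (⋂ i : Fin n, f^[(i : ℕ)] ⁻¹' (u i : Set X))).toReal)

/-- The measure-theoretic (Kolmogorov–Sinai) entropy `h_μ(f)`. -/
noncomputable def measEnt [MeasurableSpace X] (μ : Measure X) (f : X → X) : ℝ≥0∞ :=
  ⨆ (P : Finset (Set X)) (_ : IsFinBorelPartition P),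
    Filter.atTop.limsup fun n : ℕ => ENNReal.ofReal (partEntSum μ f P n) / (n : ℝ≥0∞)

end MeasureDefs


section AuxSemiconj

private lemma sInf_eq_of_aux (S T : Set ℕ) (hA : ∀ n ∈ T, ∃ m ∈ S, m ≤ n)
    (hB : ∀ n ∈ S, ∃ m ∈ T, m ≤ n) : sInf S = sInf T := by
  rcases T.eq_empty_or_nonempty with hT | hT
  · have hS : S = ∅ := by
      ext n
      simp only [Set.mem_empty_iff_false, iff_false]
      intro hn
      obtain ⟨m, hm, -⟩ := hB n hn
      rw [hT] at hm
      exact hm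
    rw [hS, hT]
  · have hS : S.Nonempty := by
      obtain ⟨n, hn⟩ := hT
      obtain ⟨m, hm, -⟩ := hA n hn
      exact ⟨m, hm⟩
    apply le_antisymm
    · obtain ⟨m, hm, hle⟩ := hA _ (Nat.sInf_mem hT)
      exact le_trans (Nat.sInf_le hm) hle
    · obtain ⟨m, hm, hle⟩ := hB _ (Nat.sInf_mem hS)
      exact le_trans (Nat.sInf_le hm) hle

private lemma coverN_preim {X Y : Type*} {h : X → Y} (hsurj : Function.Surjective h)
    (𝒰 : Set (Set Y)) : coverN (preimCover h 𝒰) = coverN 𝒰 := by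
  classical
  unfold coverN
  apply sInf_eq_of_aux
  · -- from a Y-subcover get an X-subcover of ≤ cardinality
    rintro n ⟨𝒱, h𝒱sub, h𝒱cov, rfl⟩
    refine ⟨(𝒱.image (fun U => h ⁻¹' U)).card, ⟨𝒱.image (fun U => h ⁻¹' U), ?_, ?_, rfl⟩,
      Finset.card_image_le⟩
    · rw [Finset.coe_image]
      exact Set.image_mono h𝒱sub
    · rw [Finset.coe_image, Set.sUnion_image, ← Set.preimage_sUnion, h𝒱cov, Set.preimage_univ]
  · -- from an X-subcover of preimages get a Y-subcover of ≤ cardinality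
    rintro n ⟨𝒲, h𝒲sub, h𝒲cov, rfl⟩
    have hchoose : ∀ W ∈ 𝒲, ∃ U, U ∈ 𝒰 ∧ h ⁻¹' U = W := by
      intro W hW
      obtain ⟨U, hU, hUW⟩ := h𝒲sub hW
      exact ⟨U, hU, hUW⟩
    set u : Set X → Set Y := fun W =>
      if hw : ∃ U, U ∈ 𝒰 ∧ h ⁻¹' U = W then hw.choose else ∅ with hu
    have hu𝒰 : ∀ W ∈ 𝒲, u W ∈ 𝒰 ∧ h ⁻¹' (u W) = W := by
      intro W hW
      have hw := hchoose W hW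
      simp only [hu, dif_pos hw]
      exact hw.choose_spec
    refine ⟨(𝒲.image u).card, ⟨𝒲.image u, ?_, ?_, rfl⟩, Finset.card_image_le⟩
    · intro V hV
      simp only [Finset.coe_image, Set.mem_image, Finset.mem_coe] at hV
      obtain ⟨W, hW, rfl⟩ := hV
      exact (hu𝒰 W hW).1
    · apply Set.eq_univ_of_forall
      intro y
      obtain ⟨x, rfl⟩ := hsurj y
      have hx : x ∈ ⋃₀ (𝒲 : Set (Set X)) := h𝒲cov ▸ Set.mem_univ x
      obtain ⟨W, hW, hxW⟩ := hx
      refine ⟨u W, ?_, ?_⟩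
      · simp only [Finset.coe_image, Set.mem_image, Finset.mem_coe]
        exact ⟨W, hW, rfl⟩
      · have := (hu𝒰 W hW).2
        rw [← this] at hxW
        exact hxW

private lemma cEnt_le_of_semiconj_aux {X Y : Type*} [TopologicalSpace X] [TopologicalSpace Y]
    (f : X → X) (g : Y → Y)
    (h : X → Y) (hperf : IsPerfectMap h) (hsurj : Function.Surjective h)
    (hconj : h ∘ f = g ∘ h) : cEnt g ≤ cEnt f := by
  have hsc : Function.Semiconj h f g := fun x => congrFun hconj x
  have hcomm : ∀ (i : ℕ) (s : Set Y), f^[i] ⁻¹' (h ⁻¹' s) = h ⁻¹' (g^[i] ⁻¹' s) := by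
    intro i s
    ext x
    simp only [Set.mem_preimage, (hsc.iterate_right i) x]
  have hproper : IsProperMap h := by
    rw [isProperMap_iff_isClosedMap_and_compact_fibers]
    exact ⟨hperf.1, hperf.2.1, hperf.2.2⟩
  apply iSup_le
  intro 𝒰
  apply iSup_le
  intro h𝒰
  have hcov : IsCoCompactCover (preimCover h 𝒰) := by
    constructor
    · rintro _ ⟨U, hU, rfl⟩
      refine ⟨(h𝒰.1 U hU).1.preimage hperf.1, ?_⟩
      rw [← Set.preimage_compl]
      exact hproper.isCompact_preimage (h𝒰.1 U hU).2
    · rw [preimCover, Set.sUnion_image, ← Set.preimage_sUnion, h𝒰.2, Set.preimage_univ]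
  have hkey : ∀ n, iterJoin f (preimCover h 𝒰) n = preimCover h (iterJoin g 𝒰 n) := by
    intro n
    ext W
    constructor
    · rintro ⟨u, hu, rfl⟩
      choose v hv hveq using fun i => (hu i)
      refine ⟨⋂ i : Fin n, g^[(i : ℕ)] ⁻¹' v i, ⟨v, hv, rfl⟩, ?_⟩
      simp only [Set.preimage_iInter]
      exact Set.iInter_congr fun i => by rw [← hveq i]; exact (hcomm _ _).symm
    · rintro ⟨-, ⟨v, hv, rfl⟩, rfl⟩
      refine ⟨fun i => h ⁻¹' v i, fun i => ⟨v i, hv i, rfl⟩, ?_⟩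
      simp only [Set.preimage_iInter]
      exact Set.iInter_congr fun i => (hcomm _ _).symm
  have hent : cEntCover g 𝒰 = cEntCover f (preimCover h 𝒰) := by
    unfold cEntCover
    congr 1
    funext n
    rw [covH, covH, hkey n, coverN_preim hsurj]
  calc cEntCover g 𝒰 = cEntCover f (preimCover h 𝒰) := hent
    _ ≤ cEnt f := le_iSup₂ (f := fun 𝒱 (_ : IsCoCompactCover 𝒱) => cEntCover f 𝒱)
        (preimCover h 𝒰) hcov

end AuxSemiconj

/-- If `h` is a perfect continuous surjection semiconjugating the perfect maps `f`
and `g` (i.e. `h ∘ f = g ∘ h`), then `c(g) ≤ c(f)`; if `h` is moreover a homeomorphism, then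
`c(f) = c(g)`. -/
theorem cEnt_of_semiconj {X Y : Type*} [TopologicalSpace X] [TopologicalSpace Y]
    [T2Space X] [T2Space Y] (f : X → X) (g : Y → Y)
    (hf : IsPerfectMap f) (hg : IsPerfectMap g)
    (h : X → Y) (hperf : IsPerfectMap h) (hsurj : Function.Surjective h)
    (hconj : h ∘ f = g ∘ h) :
    cEnt g ≤ cEnt f ∧ ((∃ e : X ≃ₜ Y, ⇑e = h) → cEnt f = cEnt g) := by
  refine ⟨cEnt_le_of_semiconj_aux f g h hperf hsurj hconj, ?_⟩
  rintro ⟨e, rfl⟩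
  refine le_antisymm ?_ (cEnt_le_of_semiconj_aux f g _ hperf hsurj hconj)
  have hperm : IsPerfectMap (⇑e.symm : Y → X) := by
    refine ⟨e.symm.continuous, e.symm.isClosedMap, fun x => ?_⟩
    have : (⇑e.symm : Y → X) ⁻¹' {x} = {e x} := by
      ext y
      simp only [Set.mem_preimage, Set.mem_singleton_iff]
      exact e.symm_apply_eq
    rw [this]
    exact isCompact_singleton
  have hconj' : (⇑e.symm : Y → X) ∘ g = f ∘ ⇑e.symm := by
    funext y
    apply e.injective
    have hy := congrFun hconj (e.symm y)
    simp only [Function.comp_apply, Homeomorph.apply_symm_apply] at hy ⊢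
    exact hy.symm
  exact cEnt_le_of_semiconj_aux g f _ hperm e.symm.surjective hconj'
end

section
/- Let X be a Hausdorff topological space and f : X → X a perfect mapping. If Λ ⊆ X is a closed subset invariant under f (i.e., f(Λ) ⊆ Λ), then the co-compact entropy of the restriction f|_Λ : Λ → Λ satisfies c(f|_Λ) ≤ c(f). -/
open Set Filter Topology ENNReal

section Aux

open Set Filter ENNReal

variable {X : Type*}

lemma exists_finite_subcover' [TopologicalSpace X] {𝒰 : Set (Set X)}
    (h : IsCoCompactCover 𝒰) :
    ∃ 𝒱 : Finset (Set X), ↑𝒱 ⊆ 𝒰 ∧ ⋃₀ (𝒱 : Set (Set X)) = Set.univ := by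
  classical
  rcases 𝒰.eq_empty_or_nonempty with rfl | ⟨U, hU⟩
  · refine ⟨∅, by simp, ?_⟩
    simpa using h.2
  · have hUc : IsCompact Uᶜ := (h.1 U hU).2
    have hcov : Uᶜ ⊆ ⋃ V : 𝒰, (V : Set X) := by
      intro x _
      have : x ∈ ⋃₀ 𝒰 := h.2 ▸ Set.mem_univ x
      rcases this with ⟨V, hV, hxV⟩
      exact Set.mem_iUnion.mpr ⟨⟨V, hV⟩, hxV⟩
    obtain ⟨t, ht⟩ := hUc.elim_finite_subcover (fun V : 𝒰 => (V : Set X))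
      (fun V => (h.1 V V.2).1) hcov
    refine ⟨insert U (t.image Subtype.val), ?_, ?_⟩
    · intro V hV
      simp only [Finset.coe_insert, Set.mem_insert_iff, Finset.coe_image, Set.mem_image,
        Finset.mem_coe] at hV
      rcases hV with rfl | ⟨W, _, rfl⟩
      · exact hU
      · exact W.2
    · apply Set.eq_univ_of_forall
      intro x
      by_cases hx : x ∈ U
      · exact ⟨U, by simp, hx⟩
      · have := ht hx
        rcases Set.mem_iUnion₂.mp this with ⟨V, hVt, hxV⟩
        refine ⟨V, ?_, hxV⟩
        simp only [Finset.coe_insert, Set.mem_insert_iff, Finset.coe_image, Set.mem_image,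
          Finset.mem_coe]
        exact Or.inr ⟨V, hVt, rfl⟩

lemma isProperMap_iterate [TopologicalSpace X] {f : X → X}
    (hf : IsProperMap f) (i : ℕ) : IsProperMap (f^[i]) := by
  induction i with
  | zero => exact isProperMap_id
  | succ n ih => rw [Function.iterate_succ]; exact ih.comp hf

lemma iterJoin_isCoCompactCover [TopologicalSpace X] [T2Space X] {f : X → X}
    (hf : IsPerfectMap f) {𝒰 : Set (Set X)} (h : IsCoCompactCover 𝒰) (n : ℕ) :
    IsCoCompactCover (iterJoin f 𝒰 n) := by
  have hfp : IsProperMap f :=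
    isProperMap_iff_isClosedMap_and_compact_fibers.mpr hf
  constructor
  · rintro W ⟨u, hu, rfl⟩
    constructor
    · exact isOpen_iInter_of_finite fun i =>
        ((isProperMap_iterate hfp i).continuous).isOpen_preimage _ (h.1 _ (hu i)).1
    · rw [Set.compl_iInter]
      apply isCompact_iUnion
      intro i
      rw [← Set.preimage_compl]
      exact (isProperMap_iterate hfp i).isCompact_preimage (h.1 _ (hu i)).2
  · apply Set.eq_univ_of_forall
    intro x
    have hchoice : ∀ i : Fin n, ∃ U ∈ 𝒰, f^[(i : ℕ)] x ∈ U := by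
      intro i
      have : f^[(i : ℕ)] x ∈ ⋃₀ 𝒰 := h.2 ▸ Set.mem_univ _
      exact this
    choose u hu hxu using hchoice
    exact ⟨⋂ i : Fin n, f^[(i : ℕ)] ⁻¹' u i, ⟨u, hu, rfl⟩,
      Set.mem_iInter.mpr fun i => hxu i⟩

end Aux

/-- If `Λ` is closed and `f(Λ) ⊆ Λ` for a perfect map `f` on a Hausdorff space,
then the co-compact entropy of the restriction `f|_Λ : Λ → Λ` is at most `c(f)`. -/
theorem cEnt_restrict_le {X : Type*} [TopologicalSpace X] [T2Space X]
    (f : X → X) (hf : IsPerfectMap f) (Λ : Set X) (hΛ : IsClosed Λ)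
    (hinv : Set.MapsTo f Λ Λ) :
    cEnt (Set.MapsTo.restrict f Λ Λ hinv) ≤ cEnt f := by
  classical
  set g := Set.MapsTo.restrict f Λ Λ hinv with hg
  apply iSup₂_le
  intro 𝒰 h𝒰
  by_cases hE : IsEmpty ↥Λ
  · -- empty case: the entropy is 0
    have hzero : ∀ n : ℕ, covH (iterJoin g 𝒰 n) = 0 := by
      intro n
      have h0 : coverN (iterJoin g 𝒰 n) = 0 := by
        apply Nat.sInf_eq_zero.mpr
        left
        exact ⟨∅, by simp, by simp [Set.eq_empty_of_isEmpty (Set.univ : Set ↥Λ)], rfl⟩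
      simp [covH, h0]
    have : cEntCover g 𝒰 = 0 := by
      have : (fun n : ℕ => covH (iterJoin g 𝒰 n) / (n : ℝ≥0∞)) = fun _ => 0 := by
        funext n; simp [hzero n]
      rw [cEntCover, this, limsup_const]
    simp [this]
  · push_neg at hE
    -- the extension of each cover element
    set G : Set ↥Λ → Set X := fun U => (Subtype.val '' Uᶜ)ᶜ with hG
    have hGpre : ∀ U : Set ↥Λ, Subtype.val ⁻¹' (G U) = U := by
      intro U
      rw [hG]
      simp only [Set.preimage_compl, Set.preimage_image_eq _ Subtype.val_injective, compl_compl]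
    set 𝒰' : Set (Set X) := G '' 𝒰 with h𝒰'
    have h𝒰ne : 𝒰.Nonempty := by
      obtain ⟨x⟩ := hE
      have : x ∈ ⋃₀ 𝒰 := h𝒰.2 ▸ Set.mem_univ x
      rcases this with ⟨U, hU, _⟩
      exact ⟨U, hU⟩
    have hcc : IsCoCompactCover 𝒰' := by
      constructor
      · rintro V ⟨U, hU, rfl⟩
        have hcom : IsCompact (Subtype.val '' Uᶜ) :=
          (h𝒰.1 U hU).2.image continuous_subtype_val
        refine ⟨hcom.isClosed.isOpen_compl, ?_⟩
        rw [hG, compl_compl]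
        exact hcom
      · apply Set.eq_univ_of_forall
        intro x
        by_cases hx : x ∈ Λ
        · have : (⟨x, hx⟩ : ↥Λ) ∈ ⋃₀ 𝒰 := h𝒰.2 ▸ Set.mem_univ _
          rcases this with ⟨U, hU, hxU⟩
          refine ⟨G U, ⟨U, hU, rfl⟩, ?_⟩
          rw [hG]
          intro hmem
          rcases hmem with ⟨y, hy, hyx⟩
          have : y = ⟨x, hx⟩ := Subtype.ext hyx
          rw [this] at hy
          exact hy hxU
        · obtain ⟨U, hU⟩ := h𝒰ne
          refine ⟨G U, ⟨U, hU, rfl⟩, ?_⟩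
          rw [hG]
          intro hmem
          rcases hmem with ⟨y, _, hyx⟩
          exact hx (hyx ▸ y.2)
    -- commutation of iterates with the inclusion
    have hcomm : ∀ (i : ℕ) (x : ↥Λ), (↑(g^[i] x) : X) = f^[i] (↑x : X) := by
      intro i
      induction i with
      | zero => intro x; simp
      | succ m ih =>
        intro x
        rw [Function.iterate_succ', Function.iterate_succ']
        simp only [Function.comp_apply]
        rw [hg, Set.MapsTo.val_restrict_apply, ih x]
    -- preimages of extended sets
    have hpre : ∀ (i : ℕ) (U : Set ↥Λ),
        Subtype.val ⁻¹' (f^[i] ⁻¹' (G U)) = g^[i] ⁻¹' U := by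
      intro i U
      ext x
      simp only [Set.mem_preimage]
      rw [← hcomm i x]
      constructor
      · intro h; rw [← hGpre U]; exact h
      · intro h; rw [← hGpre U] at h; exact h
    -- compare coverN termwise
    have hN : ∀ n : ℕ, coverN (iterJoin g 𝒰 n) ≤ coverN (iterJoin f 𝒰' n) := by
      intro n
      have hccn : IsCoCompactCover (iterJoin f 𝒰' n) :=
        iterJoin_isCoCompactCover hf hcc n
      obtain ⟨𝒱0, h𝒱0sub, h𝒱0cov⟩ := exists_finite_subcover' hccn
      have hSne : {m | ∃ 𝒱 : Finset (Set X), ↑𝒱 ⊆ iterJoin f 𝒰' n ∧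
          ⋃₀ (𝒱 : Set (Set X)) = Set.univ ∧ 𝒱.card = m}.Nonempty :=
        ⟨𝒱0.card, 𝒱0, h𝒱0sub, h𝒱0cov, rfl⟩
      have hmem := Nat.sInf_mem hSne
      obtain ⟨𝒱, h𝒱sub, h𝒱cov, h𝒱card⟩ := hmem
      set 𝒲 : Finset (Set ↥Λ) := 𝒱.image (fun W => Subtype.val ⁻¹' W) with h𝒲
      have h𝒲sub : ↑𝒲 ⊆ iterJoin g 𝒰 n := by
        intro V hV
        rw [h𝒲] at hV
        simp only [Finset.coe_image, Set.mem_image, Finset.mem_coe] at hV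
        obtain ⟨W, hW, rfl⟩ := hV
        obtain ⟨u, hu, rfl⟩ := h𝒱sub hW
        have hvs : ∀ i : Fin n, ∃ V ∈ 𝒰, G V = u i := by
          intro i
          exact (h𝒰' ▸ hu i : u i ∈ G '' 𝒰).imp fun V hV => ⟨hV.1, hV.2⟩
        choose v hv hGv using hvs
        refine ⟨v, hv, ?_⟩
        rw [Set.preimage_iInter]
        apply Set.iInter_congr
        intro i
        rw [← hGv i, hpre]
      have h𝒲cov : ⋃₀ (𝒲 : Set (Set ↥Λ)) = Set.univ := by
        apply Set.eq_univ_of_forall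
        intro x
        have : (↑x : X) ∈ ⋃₀ (𝒱 : Set (Set X)) := h𝒱cov ▸ Set.mem_univ _
        rcases this with ⟨W, hW, hxW⟩
        refine ⟨Subtype.val ⁻¹' W, ?_, hxW⟩
        rw [h𝒲]
        simp only [Finset.coe_image, Set.mem_image, Finset.mem_coe]
        exact ⟨W, hW, rfl⟩
      calc coverN (iterJoin g 𝒰 n) ≤ 𝒲.card := Nat.sInf_le ⟨𝒲, h𝒲sub, h𝒲cov, rfl⟩
        _ ≤ 𝒱.card := Finset.card_image_le
        _ = coverN (iterJoin f 𝒰' n) := h𝒱card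
    -- compare covH termwise
    have hH : ∀ n : ℕ, covH (iterJoin g 𝒰 n) ≤ covH (iterJoin f 𝒰' n) := by
      intro n
      apply ENNReal.ofReal_le_ofReal
      rcases Nat.eq_zero_or_pos (coverN (iterJoin g 𝒰 n)) with h0 | hpos
      · rw [h0]
        simp only [Nat.cast_zero, Real.log_zero]
        rcases Nat.eq_zero_or_pos (coverN (iterJoin f 𝒰' n)) with h0' | hpos'
        · rw [h0']; simp
        · apply Real.log_nonneg
          exact_mod_cast hpos'
      · apply Real.log_le_log (by exact_mod_cast hpos)
        exact_mod_cast hN n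
    -- conclude
    calc cEntCover g 𝒰 ≤ cEntCover f 𝒰' := by
          exact limsup_le_limsup (Eventually.of_forall fun n =>
            ENNReal.div_le_div_right (hH n) _)
      _ ≤ cEnt f := le_iSup₂ (f := fun 𝒱 (_ : IsCoCompactCover 𝒱) => cEntCover f 𝒱) 𝒰' hcc
end

section
/- Let (X,d) be a metric space and f : X → X a perfect mapping. Then the co-compact entropy of f is at most Bowen's entropy of f: c(f) ≤ h_d(f). -/
open Set Filter Topology ENNReal

section AuxProof

variable {X : Type*} [MetricSpace X]

private lemma sep_card_bound' {K : Set X} (hK : IsCompact K) {f : X → X} (hfc : Continuous f)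
    {ε : ℝ} (hε : 0 < ε) (n : ℕ) :
    ∃ N : ℕ, ∀ E : Finset X, ↑E ⊆ K → IsNSepSet dist f n ε ↑E → E.card ≤ N := by
  classical
  set Φ : X → (Fin n → X) := fun x j => f^[(j : ℕ)] x with hΦ
  have hΦc : Continuous Φ := continuous_pi fun j => hfc.iterate _
  have hcomp : IsCompact (Φ '' K) := hK.image hΦc
  obtain ⟨t, htf, hts⟩ := Metric.totallyBounded_iff.mp hcomp.totallyBounded (ε / 2) (half_pos hε)
  refine ⟨htf.toFinset.card, fun E hEK hEsep => ?_⟩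
  have hch : ∀ e ∈ E, ∃ y ∈ t, Φ e ∈ Metric.ball y (ε / 2) := by
    intro e he
    have : Φ e ∈ ⋃ y ∈ t, Metric.ball y (ε / 2) := hts ⟨e, hEK he, rfl⟩
    simpa using this
  choose ψ hψt hψb using hch
  refine Finset.card_le_card_of_injOn (fun e => if he : e ∈ E then ψ e he else Φ e)
    (fun e he => by simp [Finset.mem_coe.mp he, htf.mem_toFinset, hψt e he]) ?_
  intro e₁ he₁ e₂ he₂ heq
  simp only [Finset.mem_coe] at he₁ he₂
  simp only [dif_pos he₁, dif_pos he₂] at heq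
  by_contra hne
  obtain ⟨j, hj, hjd⟩ := hEsep e₁ he₁ e₂ he₂ hne
  have hb1 : dist (Φ e₁) (ψ e₁ he₁) < ε / 2 := Metric.mem_ball.mp (hψb e₁ he₁)
  have hb2 : dist (Φ e₂) (ψ e₂ he₂) < ε / 2 := Metric.mem_ball.mp (hψb e₂ he₂)
  rw [heq] at hb1
  have htri := dist_triangle (Φ e₁) (ψ e₂ he₂) (Φ e₂)
  rw [dist_comm (ψ e₂ he₂) (Φ e₂)] at htri
  have h1 : dist (Φ e₁) (Φ e₂) < ε := by linarith
  have h2 : dist (f^[j] e₁) (f^[j] e₂) ≤ dist (Φ e₁) (Φ e₂) := dist_le_pi_dist (Φ e₁) (Φ e₂) ⟨j, hj⟩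
  linarith

private lemma exists_max_sep' {K : Set X} (hK : IsCompact K) {f : X → X} (hfc : Continuous f)
    {ε : ℝ} (hε : 0 < ε) (n : ℕ) :
    ∃ E : Finset X, ↑E ⊆ K ∧ IsNSepSet dist f n ε ↑E ∧
      ((E.card : ℝ≥0∞) ≤ sepCard dist f n ε K) ∧
      ∀ y ∈ K, ∃ e ∈ E, ∀ j < n, dist (f^[j] y) (f^[j] e) ≤ ε := by
  classical
  obtain ⟨N, hN⟩ := sep_card_bound' hK hfc hε n
  set S : Set ℕ := {m | ∃ E : Finset X, ↑E ⊆ K ∧ IsNSepSet dist f n ε ↑E ∧ E.card = m} with hS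
  have hS0 : 0 ∈ S := ⟨∅, by simp, by intro x hx; simp at hx, rfl⟩
  have hSbdd : BddAbove S := ⟨N, fun m ⟨E, h1, h2, h3⟩ => h3 ▸ hN E h1 h2⟩
  obtain ⟨E, hEK, hEsep, hEcard⟩ := Nat.sSup_mem ⟨0, hS0⟩ hSbdd
  have hmax : ∀ E' : Finset X, ↑E' ⊆ K → IsNSepSet dist f n ε ↑E' → E'.card ≤ E.card := by
    intro E' h1 h2
    rw [hEcard]
    exact le_csSup hSbdd ⟨E', h1, h2, rfl⟩
  refine ⟨E, hEK, hEsep, ?_, ?_⟩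
  · exact le_iSup₂ (f := fun (E' : Finset X) (_ : ↑E' ⊆ K ∧ IsNSepSet dist f n ε ↑E') =>
      (E'.card : ℝ≥0∞)) E ⟨hEK, hEsep⟩
  · intro y hy
    by_contra hcon
    push_neg at hcon
    have hyE : y ∉ E := by
      intro hyE
      obtain ⟨j, _, hj⟩ := hcon y hyE
      simp at hj
      linarith
    have hsep' : IsNSepSet dist f n ε ↑(insert y E) := by
      intro a ha b hb hab
      simp only [Finset.coe_insert, Set.mem_insert_iff, Finset.mem_coe] at ha hb
      rcases ha with rfl | ha
      · rcases hb with rfl | hb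
        · exact absurd rfl hab
        · obtain ⟨j, hj1, hj2⟩ := hcon b hb
          exact ⟨j, hj1, hj2⟩
      · rcases hb with rfl | hb
        · obtain ⟨j, hj1, hj2⟩ := hcon a ha
          exact ⟨j, hj1, by rw [dist_comm]; exact hj2⟩
        · exact hEsep a ha b hb hab
    have hsub' : ↑(insert y E) ⊆ K := by
      rw [Finset.coe_insert]
      exact Set.insert_subset hy hEK
    have := hmax _ hsub' hsep'
    rw [Finset.card_insert_of_notMem hyE] at this
    omega

private lemma ofReal_log_le_elog' {m : ℕ} {x : ℝ≥0∞} (hm : 1 ≤ m) (hx : (m : ℝ≥0∞) ≤ x) :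
    ENNReal.ofReal (Real.log m) ≤ elog x := by
  rcases eq_top_or_lt_top x with h | h
  · rw [elog, if_pos h]; exact le_top
  · rw [elog, if_neg h.ne]
    apply ENNReal.ofReal_le_ofReal
    apply Real.log_le_log (by exact_mod_cast hm)
    have h2 : ((m : ℝ≥0∞)).toReal ≤ x.toReal := ENNReal.toReal_mono h.ne hx
    simpa using h2

private lemma limsup_add_tendsto_zero' {u v : ℕ → ℝ≥0∞} (hv : Tendsto v atTop (𝓝 0)) :
    Filter.atTop.limsup (fun n => u n + v n) ≤ Filter.atTop.limsup u := by
  rcases eq_top_or_lt_top (Filter.atTop.limsup u) with hL | hL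
  · rw [hL]; exact le_top
  refine ENNReal.le_of_forall_pos_le_add fun ε hε _ => ?_
  have hε2 : (0 : ℝ≥0∞) < (ε : ℝ≥0∞) / 2 :=
    ENNReal.div_pos (by exact_mod_cast hε.ne') (by norm_num)
  have h1 : ∀ᶠ n in atTop, u n < Filter.atTop.limsup u + (ε : ℝ≥0∞) / 2 :=
    eventually_lt_of_limsup_lt (ENNReal.lt_add_right hL.ne hε2.ne')
  have h2 : ∀ᶠ n in atTop, v n < (ε : ℝ≥0∞) / 2 := hv.eventually_lt_const hε2
  refine limsup_le_of_le (by isBoundedDefault) ?_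
  filter_upwards [h1, h2] with n hn1 hn2
  calc u n + v n ≤ (Filter.atTop.limsup u + (ε : ℝ≥0∞) / 2) + (ε : ℝ≥0∞) / 2 :=
        add_le_add hn1.le hn2.le
  _ = Filter.atTop.limsup u + (ε : ℝ≥0∞) := by rw [add_assoc, ENNReal.add_halves]

private lemma tendsto_log_term_zero' :
    Tendsto (fun n : ℕ => ENNReal.ofReal (Real.log (2 * n)) / (n : ℝ≥0∞)) atTop (𝓝 0) := by
  have hr : Tendsto (fun n : ℕ => Real.log (2 * n) / n) atTop (𝓝 0) := by
    have h1 : Tendsto (fun n : ℕ => Real.log 2 / n) atTop (𝓝 0) :=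
      tendsto_const_div_atTop_nhds_zero_nat _
    have h2 : Tendsto (fun n : ℕ => Real.log n / n) atTop (𝓝 0) := by
      have := Real.isLittleO_log_id_atTop.tendsto_div_nhds_zero
      have hcast : Tendsto (fun n : ℕ => (n : ℝ)) atTop atTop := tendsto_natCast_atTop_atTop
      exact (this.comp hcast).congr (fun n => by simp)
    have hsum := h1.add h2
    rw [add_zero] at hsum
    apply hsum.congr'
    filter_upwards [eventually_ge_atTop 1] with n hn
    have hn0 : (0 : ℝ) < n := by exact_mod_cast hn
    rw [← add_div, ← Real.log_mul two_ne_zero hn0.ne']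
  have hconv : Tendsto (fun n : ℕ => ENNReal.ofReal (Real.log (2 * n) / n)) atTop (𝓝 0) := by
    have := (ENNReal.continuous_ofReal.tendsto 0).comp hr
    simpa [Function.comp_def] using this
  apply hconv.congr'
  filter_upwards [eventually_ge_atTop 1] with n hn
  have hn0 : (0 : ℝ) < n := by exact_mod_cast hn
  rw [ENNReal.ofReal_div_of_pos hn0, ENNReal.ofReal_natCast]

end AuxProof

/-- For a perfect map `f` on a metric space `(X,d)`, the co-compact entropy of `f`
is at most Bowen's entropy: `c(f) ≤ h_d(f)`. -/
theorem cEnt_le_bowenEnt {X : Type*} [MetricSpace X] (f : X → X) (hf : IsPerfectMap f) :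
    cEnt f ≤ bowenEnt dist f := by
  classical
  rw [cEnt]
  refine iSup₂_le fun 𝒰 h𝒰 => ?_
  rcases isEmpty_or_nonempty X with hX | hX
  · -- empty space: cEntCover is 0
    have h0 : ∀ n : ℕ, covH (iterJoin f 𝒰 n) = 0 := by
      intro n
      have hc : coverN (iterJoin f 𝒰 n) = 0 := by
        have hmem : 0 ∈ {m | ∃ 𝒱 : Finset (Set X), ↑𝒱 ⊆ iterJoin f 𝒰 n ∧
            ⋃₀ (𝒱 : Set (Set X)) = Set.univ ∧ 𝒱.card = m} :=
          ⟨∅, by simp, by simp [Set.univ_eq_empty_iff.mpr hX], rfl⟩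
        exact Nat.sInf_eq_zero.mpr (Or.inl hmem)
      simp [covH, hc]
    have hz : cEntCover f 𝒰 = 0 := by
      rw [cEntCover]
      have heq : (fun n : ℕ => covH (iterJoin f 𝒰 n) / (n : ℝ≥0∞)) = fun _ => (0 : ℝ≥0∞) := by
        funext n; rw [h0, ENNReal.zero_div]
      rw [heq, limsup_const]
    rw [hz]
    exact zero_le
  -- nonempty case
  obtain ⟨x₀⟩ := hX
  have hx₀ : x₀ ∈ ⋃₀ 𝒰 := by rw [h𝒰.2]; trivial
  obtain ⟨U₀, hU₀𝒰, _⟩ := hx₀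
  have hU₀cc : IsCoCompactOpen U₀ := h𝒰.1 _ hU₀𝒰
  have hcover : U₀ᶜ ⊆ ⋃ U ∈ 𝒰, U := by
    intro x _
    have hx : x ∈ ⋃₀ 𝒰 := by rw [h𝒰.2]; trivial
    obtain ⟨U, hU, hxU⟩ := hx
    exact mem_biUnion hU hxU
  obtain ⟨G, hG𝒰, hGfin, hGcov⟩ :=
    hU₀cc.2.elim_finite_subcover_image (fun U hU => (h𝒰.1 U hU).1) hcover
  set F : Set (Set X) := insert U₀ G with hF
  have hFfin : F.Finite := hGfin.insert _
  have hF𝒰 : F ⊆ 𝒰 := Set.insert_subset hU₀𝒰 hG𝒰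
  have hFopen : ∀ U ∈ F, IsOpen U := fun U hU => (h𝒰.1 U (hF𝒰 hU)).1
  set K : Set X := ⋃ U ∈ F, Uᶜ with hKdef
  have hKc : IsCompact K := hFfin.isCompact_biUnion fun U hU => (h𝒰.1 U (hF𝒰 hU)).2
  have hKcompl : ∀ x, x ∉ K → ∀ U ∈ F, x ∈ U := by
    intro x hx U hU
    by_contra h
    exact hx (mem_biUnion hU (show x ∈ Uᶜ from h))
  have hKsub : K ⊆ ⋃₀ F := by
    intro x _
    by_cases hx : x ∈ U₀
    · exact ⟨U₀, mem_insert _ _, hx⟩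
    · obtain ⟨U, hU, hxU⟩ := mem_iUnion₂.mp (hGcov hx)
      exact ⟨U, mem_insert_of_mem _ hU, hxU⟩
  obtain ⟨δ₀, hδ₀, hleb⟩ := lebesgue_number_lemma_of_metric_sUnion hKc hFopen hKsub
  set δ : ℝ := δ₀ / 2 with hδdef
  have hδ : 0 < δ := half_pos hδ₀
  have hglob : ∀ x : X, ∃ U ∈ F, Metric.ball x δ ⊆ U := by
    intro x
    by_cases hx : ∃ y ∈ K, dist x y < δ
    · obtain ⟨y, hyK, hxy⟩ := hx
      obtain ⟨U, hUF, hU⟩ := hleb y hyK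
      refine ⟨U, hUF, fun z hz => hU ?_⟩
      rw [Metric.mem_ball] at hz ⊢
      calc dist z y ≤ dist z x + dist x y := dist_triangle _ _ _
      _ < δ + δ := add_lt_add hz hxy
      _ = δ₀ := by rw [hδdef]; ring
    · push_neg at hx
      refine ⟨U₀, mem_insert _ _, fun z hz => ?_⟩
      have hzK : z ∉ K := by
        intro hzK
        have := hx z hzK
        rw [Metric.mem_ball, dist_comm] at hz
        linarith
      exact hKcompl z hzK U₀ (mem_insert _ _)
  choose ℓ hℓF hℓball using hglob
  set ε : ℝ := δ / 2 with hεdef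
  have hε : 0 < ε := half_pos hδ
  have hεδ : ε < δ := by rw [hεdef]; linarith
  refine le_trans ?_ (le_iSup₂ (f := fun (K : Set X) (_ : IsCompact K) => sepEnt dist f K) K hKc)
  refine le_trans ?_ (le_iSup₂ (f := fun (e : ℝ) (_ : 0 < e) => sepEntEps dist f e K) ε hε)
  -- choose maximal separated sets
  have hmaxsep := fun n => exists_max_sep' hKc hf.1 hε n
  choose E hEK hEsep hEle hEspan using hmaxsep
  -- counting lemma
  have hcount : ∀ n : ℕ, 1 ≤ n → coverN (iterJoin f 𝒰 n) ≤ 1 + n * (E n).card := by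
    intro n hn
    set g : ℕ × X → Set X := fun p =>
      ⋂ j : Fin n, f^[(j : ℕ)] ⁻¹' (if (j : ℕ) < p.1 then U₀ else ℓ (f^[(j : ℕ) - p.1] p.2))
      with hg
    set W₀ : Set X := ⋂ j : Fin n, f^[(j : ℕ)] ⁻¹' U₀ with hW₀
    set 𝒲 : Finset (Set X) := insert W₀ ((Finset.range n ×ˢ E n).image g) with h𝒲
    have h𝒲sub : ↑𝒲 ⊆ iterJoin f 𝒰 n := by
      intro W hW
      rw [h𝒲] at hW
      simp only [Finset.coe_insert, Set.mem_insert_iff, Finset.coe_image, Set.mem_image,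
        Finset.mem_coe] at hW
      rcases hW with rfl | ⟨p, hp, rfl⟩
      · exact ⟨fun _ => U₀, fun _ => hU₀𝒰, rfl⟩
      · refine ⟨fun j => if (j : ℕ) < p.1 then U₀ else ℓ (f^[(j : ℕ) - p.1] p.2), fun j => ?_, rfl⟩
        dsimp only
        split_ifs with hj
        · exact hU₀𝒰
        · exact hF𝒰 (hℓF _)
    have h𝒲cov : ⋃₀ (𝒲 : Set (Set X)) = Set.univ := by
      apply Set.eq_univ_of_forall
      intro x
      by_cases hT : ∃ j, j < n ∧ f^[j] x ∈ K
      · set i : ℕ := Nat.find hT with hi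
        obtain ⟨hin, hiK⟩ := Nat.find_spec hT
        have himin : ∀ j < i, f^[j] x ∉ K := by
          intro j hj hjK
          exact Nat.find_min hT hj ⟨lt_trans hj hin, hjK⟩
        obtain ⟨e, heE, hspan⟩ := hEspan n (f^[i] x) hiK
        refine ⟨g (i, e), ?_, ?_⟩
        · apply Finset.mem_coe.mpr
          rw [h𝒲]
          exact Finset.mem_insert_of_mem (Finset.mem_image_of_mem g
            (Finset.mem_product.mpr ⟨Finset.mem_range.mpr hin, heE⟩))
        · rw [hg]
          refine mem_iInter.mpr fun j => ?_
          show x ∈ f^[(j : ℕ)] ⁻¹' (if (j : ℕ) < i then U₀ else ℓ (f^[(j : ℕ) - i] e))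
          by_cases hji : (j : ℕ) < i
          · rw [if_pos hji]
            exact hKcompl _ (himin _ hji) U₀ (mem_insert _ _)
          · rw [if_neg hji]
            push_neg at hji
            have hj1 : (j : ℕ) = ((j : ℕ) - i) + i := (Nat.sub_add_cancel hji).symm
            have hj2 : f^[(j : ℕ)] x = f^[(j : ℕ) - i] (f^[i] x) := by
              conv_lhs => rw [hj1]
              exact Function.iterate_add_apply f _ _ x
            have hjlt : (j : ℕ) - i < n := lt_of_le_of_lt (Nat.sub_le _ _) j.2
            have hd : dist (f^[(j : ℕ) - i] (f^[i] x)) (f^[(j : ℕ) - i] e) ≤ ε :=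
              hspan _ hjlt
            apply hℓball (f^[(j : ℕ) - i] e)
            rw [Metric.mem_ball, hj2]
            exact lt_of_le_of_lt hd hεδ
      · push_neg at hT
        refine ⟨W₀, ?_, ?_⟩
        · apply Finset.mem_coe.mpr
          rw [h𝒲]
          exact Finset.mem_insert_self _ _
        · rw [hW₀]
          refine mem_iInter.mpr fun j => ?_
          exact hKcompl _ (hT j j.2) U₀ (mem_insert _ _)
    have hle : coverN (iterJoin f 𝒰 n) ≤ 𝒲.card :=
      Nat.sInf_le ⟨𝒲, h𝒲sub, h𝒲cov, rfl⟩
    have hcard : 𝒲.card ≤ 1 + n * (E n).card := by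
      calc 𝒲.card ≤ ((Finset.range n ×ˢ E n).image g).card + 1 := Finset.card_insert_le _ _
      _ ≤ (Finset.range n ×ˢ E n).card + 1 :=
          Nat.add_le_add_right (Finset.card_image_le) 1
      _ = 1 + n * (E n).card := by
          rw [Finset.card_product, Finset.card_range, Nat.add_comm]
    exact le_trans hle hcard
  -- per-n inequality
  have hgle : ∀ n : ℕ, 1 ≤ n → covH (iterJoin f 𝒰 n) / (n : ℝ≥0∞) ≤
      elog (sepCard dist f n ε K) / (n : ℝ≥0∞) +
        ENNReal.ofReal (Real.log (2 * n)) / (n : ℝ≥0∞) := by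
    intro n hn
    rcases Nat.eq_zero_or_pos (E n).card with hs | hs
    · have h1 : coverN (iterJoin f 𝒰 n) ≤ 1 := by
        have h2 := hcount n hn
        rw [hs, Nat.mul_zero] at h2
        omega
      have hlog : Real.log (coverN (iterJoin f 𝒰 n)) ≤ 0 :=
        Real.log_nonpos (by positivity) (by exact_mod_cast h1)
      have hcovH : covH (iterJoin f 𝒰 n) = 0 := by
        rw [covH, ENNReal.ofReal_eq_zero]
        exact hlog
      rw [hcovH, ENNReal.zero_div]
      exact zero_le
    · set s : ℕ := (E n).card with hsdef
      have h2n : coverN (iterJoin f 𝒰 n) ≤ 2 * n * s := by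
        have h1 : 1 ≤ n * s := Nat.one_le_iff_ne_zero.mpr (Nat.mul_ne_zero (by omega) (by omega))
        calc coverN (iterJoin f 𝒰 n) ≤ 1 + n * s := hcount n hn
        _ ≤ n * s + n * s := Nat.add_le_add_right h1 _
        _ = 2 * n * s := by ring
      have hlog : Real.log (coverN (iterJoin f 𝒰 n)) ≤ Real.log (2 * n) + Real.log s := by
        rcases Nat.eq_zero_or_pos (coverN (iterJoin f 𝒰 n)) with hc0 | hc0
        · rw [hc0]
          simp only [Nat.cast_zero, Real.log_zero]
          have hn1 : (1 : ℝ) ≤ (n : ℝ) := by exact_mod_cast hn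
          have ha : (0 : ℝ) ≤ Real.log (2 * n) := Real.log_nonneg (by linarith)
          have hb : (0 : ℝ) ≤ Real.log s := Real.log_nonneg (by exact_mod_cast hs)
          linarith
        · have hcm : (coverN (iterJoin f 𝒰 n) : ℝ) ≤ (2 * n : ℝ) * s := by
            exact_mod_cast h2n
          have hlogle := Real.log_le_log (by exact_mod_cast hc0) hcm
          have hn1 : (1 : ℝ) ≤ (n : ℝ) := by exact_mod_cast hn
          have hs1 : (1 : ℝ) ≤ (s : ℝ) := by exact_mod_cast hs
          rwa [Real.log_mul (by linarith) (by linarith)] at hlogle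
      have hn1 : (1 : ℝ) ≤ (n : ℝ) := by exact_mod_cast hn
      have ha : (0 : ℝ) ≤ Real.log (2 * n) := Real.log_nonneg (by linarith)
      have hb : (0 : ℝ) ≤ Real.log s := Real.log_nonneg (by exact_mod_cast hs)
      have hcov : covH (iterJoin f 𝒰 n) ≤
          ENNReal.ofReal (Real.log (2 * n)) + ENNReal.ofReal (Real.log s) := by
        rw [covH, ← ENNReal.ofReal_add ha hb]
        exact ENNReal.ofReal_le_ofReal hlog
      have hsepl : ENNReal.ofReal (Real.log s) ≤ elog (sepCard dist f n ε K) :=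
        ofReal_log_le_elog' hs (hEle n)
      calc covH (iterJoin f 𝒰 n) / (n : ℝ≥0∞)
          ≤ (ENNReal.ofReal (Real.log (2 * n)) + ENNReal.ofReal (Real.log s)) / (n : ℝ≥0∞) :=
            ENNReal.div_le_div_right hcov _
      _ = ENNReal.ofReal (Real.log s) / (n : ℝ≥0∞) +
            ENNReal.ofReal (Real.log (2 * n)) / (n : ℝ≥0∞) := by
            rw [ENNReal.div_add_div_same, add_comm]
      _ ≤ elog (sepCard dist f n ε K) / (n : ℝ≥0∞) +
            ENNReal.ofReal (Real.log (2 * n)) / (n : ℝ≥0∞) :=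
            add_le_add (ENNReal.div_le_div_right hsepl _) le_rfl
  -- conclude via limsup
  rw [cEntCover, sepEntEps]
  have hev : (fun n : ℕ => covH (iterJoin f 𝒰 n) / (n : ℝ≥0∞)) ≤ᶠ[atTop]
      (fun n : ℕ => elog (sepCard dist f n ε K) / (n : ℝ≥0∞) +
        ENNReal.ofReal (Real.log (2 * n)) / (n : ℝ≥0∞)) :=
    eventually_atTop.mpr ⟨1, hgle⟩
  calc Filter.atTop.limsup (fun n : ℕ => covH (iterJoin f 𝒰 n) / (n : ℝ≥0∞))
      ≤ Filter.atTop.limsup (fun n : ℕ => elog (sepCard dist f n ε K) / (n : ℝ≥0∞) +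
        ENNReal.ofReal (Real.log (2 * n)) / (n : ℝ≥0∞)) := limsup_le_limsup hev
  _ ≤ Filter.atTop.limsup (fun n : ℕ => elog (sepCard dist f n ε K) / (n : ℝ≥0∞)) :=
      limsup_add_tendsto_zero' tendsto_log_term_zero'
end

section
/- Let X be a locally compact separable metric space and d a metric of compact type on X. Fix points x₁,…,x_k ∈ X and real numbers 0 < a < b, and suppose that for every δ ∈ (a,b) the family 𝒜_δ = {B(x₁,δ),…,B(x_k,δ)} of open d-balls is an open cover of X. Then there exists δ ∈ (a,b) and a co-compact open cover 𝒜(δ) of X of cardinality k, each of whose members is either one of the open balls B(x_i,δ) or the union of two of the open balls B(x_i,δ). -/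
open Set Filter Topology ENNReal

private lemma aux_isClosed_ge {Y : Type*} (m : MetricSpace Y) (q : Y) (r : ℝ) :
    IsClosed[m.toUniformSpace.toTopologicalSpace] {p | r ≤ m.dist p q} := by
  letI := m
  exact isClosed_le continuous_const (continuous_id.dist continuous_const)

private lemma aux_isOpen_lt {Y : Type*} (m : MetricSpace Y) (q : Y) (r : ℝ) :
    IsOpen[m.toUniformSpace.toTopologicalSpace] {p | m.dist p q < r} := by
  letI := m
  exact isOpen_lt (continuous_id.dist continuous_const) continuous_const

private lemma aux_isClosed_ge' {Y : Type*} [t : TopologicalSpace Y] (m : MetricSpace Y)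
    (hm : m.toUniformSpace.toTopologicalSpace = t) (q : Y) (r : ℝ) :
    IsClosed {p | r ≤ m.dist p q} := by
  subst hm
  exact aux_isClosed_ge m q r

private lemma aux_isOpen_lt' {Y : Type*} [t : TopologicalSpace Y] (m : MetricSpace Y)
    (hm : m.toUniformSpace.toTopologicalSpace = t) (q : Y) (r : ℝ) :
    IsOpen {p | m.dist p q < r} := by
  subst hm
  exact aux_isOpen_lt m q r

/-- For a compact-type metric on a locally compact separable metric space `X`:
if for every `δ ∈ (a,b)` the balls `B(x₁,δ),…,B(x_k,δ)` cover `X`, then for some `δ ∈ (a,b)`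
there is a co-compact open cover of `X` of cardinality `k` each member of which is either one
of the balls `B(x_i,δ)` or a union of two of them. -/
theorem cocompact_cover_of_ball_cover {X : Type*} [MetricSpace X] [LocallyCompactSpace X]
    [TopologicalSpace.SeparableSpace X]
    (hd : IsCompactTypeMetric (X := X) ‹MetricSpace X›)
    (k : ℕ) (x : Fin k → X) (a b : ℝ) (ha : 0 < a) (hab : a < b)
    (hcov : ∀ δ ∈ Set.Ioo a b, ⋃ i, Metric.ball (x i) δ = Set.univ) :
    ∃ δ ∈ Set.Ioo a b, ∃ 𝒜 : Fin k → Set X,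
      (∀ i, IsCoCompactOpen (𝒜 i)) ∧ (⋃ i, 𝒜 i) = Set.univ ∧
      ∀ i, (∃ j, 𝒜 i = Metric.ball (x j) δ) ∨
        (∃ j l, 𝒜 i = Metric.ball (x j) δ ∪ Metric.ball (x l) δ) := by
  obtain ⟨mc, hmc, hdist⟩ := hd
  by_cases hX : IsCompact (Set.univ : Set X)
  · refine ⟨(a+b)/2, ⟨by linarith, by linarith⟩, fun i => Metric.ball (x i) ((a+b)/2),
      fun i => ⟨Metric.isOpen_ball,
        hX.of_isClosed_subset Metric.isOpen_ball.isClosed_compl (Set.subset_univ _)⟩,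
      hcov _ ⟨by linarith, by linarith⟩, fun i => Or.inl ⟨i, rfl⟩⟩
  · set δ₁ : ℝ := (2*a+b)/3 with hδ₁def
    set δ₂ : ℝ := (a+2*b)/3 with hδ₂def
    have hδ₁ : δ₁ ∈ Set.Ioo a b := ⟨by rw [hδ₁def]; linarith, by rw [hδ₁def]; linarith⟩
    have hδ₂ : δ₂ ∈ Set.Ioo a b := ⟨by rw [hδ₂def]; linarith, by rw [hδ₂def]; linarith⟩
    have h12 : δ₁ < δ₂ := by rw [hδ₁def, hδ₂def]; linarith
    -- key density fact
    have key : ∀ ε : ℝ, 0 < ε → ∃ y : X, mc.dist ↑y OnePoint.infty < ε := by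
      intro ε hε
      by_contra hcon
      push_neg at hcon
      apply hX
      have hrange : Set.range ((↑) : X → OnePoint X) = {p | ε ≤ mc.dist p OnePoint.infty} := by
        ext p
        constructor
        · rintro ⟨y, rfl⟩; exact hcon y
        · intro hp
          rcases p with _ | y
          · exfalso
            change ε ≤ mc.dist OnePoint.infty OnePoint.infty at hp
            rw [mc.dist_self] at hp
            linarith
          · exact ⟨y, rfl⟩
      have hclosed : IsClosed {p : OnePoint X | ε ≤ mc.dist p OnePoint.infty} := by
        exact aux_isClosed_ge' mc hmc OnePoint.infty ε
      have hcpt : IsCompact (Set.range ((↑) : X → OnePoint X)) := by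
        rw [hrange]; exact hclosed.isCompact
      rw [(OnePoint.isOpenEmbedding_coe (X := X)).isEmbedding.isCompact_iff, Set.image_univ]
      exact hcpt
    -- find i₀ close to infinity
    have hne : Nonempty X := by
      by_contra hne
      exact hX (by rw [Set.univ_eq_empty_iff.mpr (not_nonempty_iff.mp hne)]; exact isCompact_empty)
    obtain ⟨y0⟩ := hne
    have hy0 : y0 ∈ ⋃ i, Metric.ball (x i) δ₁ := by rw [hcov δ₁ hδ₁]; trivial
    obtain ⟨i0', hi0'⟩ := Set.mem_iUnion.mp hy0
    haveI : Nonempty (Fin k) := ⟨i0'⟩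
    have hi0 : ∃ i₀ : Fin k, mc.dist ↑(x i₀) OnePoint.infty ≤ δ₁ := by
      by_contra hcon
      push_neg at hcon
      set ε : ℝ := Finset.univ.inf' Finset.univ_nonempty
        (fun i => mc.dist ↑(x i) OnePoint.infty - δ₁) with hεdef
      have hεpos : 0 < ε := by
        rw [hεdef]
        apply Finset.lt_inf'_iff _ |>.mpr
        intro i _
        have := hcon i
        linarith
      obtain ⟨y, hy⟩ := key ε hεpos
      have hyc : y ∈ ⋃ i, Metric.ball (x i) δ₁ := by rw [hcov δ₁ hδ₁]; trivial
      obtain ⟨i, hi⟩ := Set.mem_iUnion.mp hyc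
      rw [Metric.mem_ball, dist_comm] at hi
      have htri := mc.dist_triangle ↑(x i) ↑y OnePoint.infty
      rw [hdist] at htri
      have hinf : ε ≤ mc.dist ↑(x i) OnePoint.infty - δ₁ := by
        rw [hεdef]
        exact Finset.inf'_le _ (Finset.mem_univ i)
      linarith
    obtain ⟨i₀, hi₀⟩ := hi0
    -- complement of ball (x i₀) δ₂ is compact
    set r : ℝ := δ₂ - δ₁ with hrdef
    have hrpos : 0 < r := by rw [hrdef]; linarith
    have hfar : ∀ y : X, y ∉ Metric.ball (x i₀) δ₂ → r ≤ mc.dist ↑y OnePoint.infty := by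
      intro y hy
      rw [Metric.mem_ball, dist_comm, not_lt] at hy
      have htri := mc.dist_triangle ↑(x i₀) OnePoint.infty ↑y
      rw [hdist] at htri
      have hcomm := mc.dist_comm OnePoint.infty (↑y : OnePoint X)
      linarith
    have hCcpt : IsCompact (Metric.ball (x i₀) δ₂)ᶜ := by
      rw [(OnePoint.isOpenEmbedding_coe (X := X)).isEmbedding.isCompact_iff]
      apply IsClosed.isCompact
      rw [← isOpen_compl_iff]
      have hcompl : ((↑) '' (Metric.ball (x i₀) δ₂)ᶜ : Set (OnePoint X))ᶜ =
          {p : OnePoint X | mc.dist p OnePoint.infty < r} ∪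
            ((↑) '' (Metric.ball (x i₀) δ₂)) := by
        ext p
        simp only [Set.mem_compl_iff, Set.mem_image, Set.mem_union, Set.mem_setOf_eq]
        constructor
        · intro hp
          rcases p with _ | y
          · left
            rw [show (none : OnePoint X) = OnePoint.infty from rfl, mc.dist_self]
            exact hrpos
          · right
            refine ⟨y, ?_, rfl⟩
            by_contra hyb
            exact hp ⟨y, hyb, rfl⟩
        · rintro (hp | ⟨y, hy, rfl⟩) ⟨z, hz, hzp⟩
          · subst hzp
            exact absurd hp (not_lt.mpr (hfar z hz))
          · rw [OnePoint.coe_eq_coe] at hzp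
            subst hzp
            exact hz hy
      rw [hcompl]
      apply IsOpen.union
      · exact aux_isOpen_lt' mc hmc OnePoint.infty r
      · exact (OnePoint.isOpenEmbedding_coe (X := X)).isOpenMap _ Metric.isOpen_ball
    refine ⟨δ₂, hδ₂, fun i => Metric.ball (x i) δ₂ ∪ Metric.ball (x i₀) δ₂, ?_, ?_, ?_⟩
    · intro i
      refine ⟨Metric.isOpen_ball.union Metric.isOpen_ball, ?_⟩
      apply hCcpt.of_isClosed_subset
        (Metric.isOpen_ball.union Metric.isOpen_ball).isClosed_compl
      rw [Set.compl_union]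
      exact Set.inter_subset_right
    · apply Set.eq_univ_of_univ_subset
      rw [← hcov δ₂ hδ₂]
      exact Set.iUnion_mono fun i => Set.subset_union_left
    · intro i
      exact Or.inr ⟨i, i₀, rfl⟩
end

section
/- Let X be a locally compact separable metric space, d a metric of compact type on X, and f : X → X a perfect mapping. Then h^d(f) = c(f), i.e., the d-entropy of f (defined via separated sets over the whole space X) equals the co-compact entropy of f. -/
open Set Filter Topology ENNReal

section AuxLemmas

open OnePoint

lemma ofReal_log_mono {a b : ℝ} (ha : 0 ≤ a) (hab : a ≤ b) :
    ENNReal.ofReal (Real.log a) ≤ ENNReal.ofReal (Real.log b) := by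
  rcases le_or_gt a 1 with h | h
  · simp [ENNReal.ofReal_eq_zero.mpr (Real.log_nonpos ha h)]
  · exact ENNReal.ofReal_le_ofReal (Real.log_le_log (by linarith) hab)

lemma elog_mono : Monotone elog := by
  intro x y h
  unfold elog
  rcases eq_or_ne y ⊤ with hy | hy
  · simp [hy]
  · have hx : x ≠ ⊤ := fun hx => hy (top_le_iff.mp (hx ▸ h))
    rw [if_neg hx, if_neg hy]
    exact ofReal_log_mono ENNReal.toReal_nonneg (ENNReal.toReal_mono hy h)

lemma elog_natCast (c : ℕ) : elog (c : ℝ≥0∞) = ENNReal.ofReal (Real.log c) := by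
  rw [elog, if_neg (ENNReal.natCast_ne_top c)]
  norm_num

section Trans

variable {Y : Type*} [tY : TopologicalSpace Y]

lemma mtrans_isOpen_ball (m : MetricSpace Y)
    (h : m.toUniformSpace.toTopologicalSpace = tY) (y : Y) (r : ℝ) :
    IsOpen {z : Y | m.dist z y < r} := by
  subst h
  letI := m
  exact Metric.isOpen_ball (x := y) (ε := r)

lemma mtrans_unifCont [CompactSpace Y] (m : MetricSpace Y)
    (h : m.toUniformSpace.toTopologicalSpace = tY) {g : Y → Y} (hg : Continuous g)
    {ε : ℝ} (hε : 0 < ε) :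
    ∃ δ > 0, ∀ a b : Y, m.dist a b < δ → m.dist (g a) (g b) < ε := by
  subst h
  letI := m
  have := CompactSpace.uniformContinuous_of_continuous hg
  rw [Metric.uniformContinuous_iff] at this
  exact this ε hε

lemma mtrans_lebesgue [CompactSpace Y] (m : MetricSpace Y)
    (h : m.toUniformSpace.toTopologicalSpace = tY) {ι : Sort*} {c : ι → Set Y}
    (ho : ∀ i, IsOpen (c i)) (hc : ∀ y : Y, ∃ i, y ∈ c i) :
    ∃ δ > 0, ∀ y : Y, ∃ i, ∀ z, m.dist z y < δ → z ∈ c i := by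
  subst h
  letI := m
  obtain ⟨δ, hδ, H⟩ := lebesgue_number_lemma_of_metric isCompact_univ ho
    (fun y _ => mem_iUnion.mpr (hc y))
  exact ⟨δ, hδ, fun y => by
    obtain ⟨i, hi⟩ := H y (mem_univ y)
    exact ⟨i, fun z hz => hi hz⟩⟩

lemma mtrans_totallyBounded [CompactSpace Y] (m : MetricSpace Y)
    (h : m.toUniformSpace.toTopologicalSpace = tY) {r : ℝ} (hr : 0 < r) :
    ∃ s : Finset Y, ∀ y : Y, ∃ z ∈ s, m.dist y z < r := by
  subst h
  letI := m
  obtain ⟨t, -, htf, hct⟩ := finite_cover_balls_of_compact (X := Y) isCompact_univ hr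
  refine ⟨htf.toFinset, fun y => ?_⟩
  obtain ⟨z, hz, hyz⟩ := mem_iUnion₂.mp (hct (mem_univ y))
  exact ⟨z, htf.mem_toFinset.mpr hz, hyz⟩

end Trans

lemma continuous_onePointExtend {X : Type*} [TopologicalSpace X] (f : X → X)
    (hf : IsPerfectMap f) : Continuous (onePointExtend f) := by
  have hproper : IsProperMap f :=
    isProperMap_iff_isClosedMap_and_compact_fibers.mpr ⟨hf.1, hf.2.1, hf.2.2⟩
  rw [OnePoint.continuous_iff]
  refine ⟨?_, OnePoint.continuous_coe.comp hf.1⟩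
  show Tendsto (fun x : X => ((f x : OnePoint X))) (coclosedCompact X) (𝓝 (OnePoint.infty))
  have : map (fun x : X => ((f x : OnePoint X))) (coclosedCompact X) ≤ 𝓝 (OnePoint.infty) := by
    rw [OnePoint.le_nhds_infty]
    intro s hs1 hs2
    rw [mem_map]
    have hpre : (fun x : X => ((f x) : OnePoint X)) ⁻¹'
        (OnePoint.some '' sᶜ ∪ {OnePoint.infty}) = (f ⁻¹' s)ᶜ := by
      ext x
      simp only [mem_preimage, mem_union, mem_image, mem_singleton_iff, mem_compl_iff]
      constructor
      · rintro (⟨y, hy, hcast⟩ | hbad)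
        · exact (OnePoint.coe_injective hcast) ▸ hy
        · exact absurd hbad (OnePoint.coe_ne_infty _)
      · intro h
        exact Or.inl ⟨f x, h, rfl⟩
    rw [hpre, Filter.mem_coclosedCompact_iff, compl_compl,
      IsClosed.closure_eq (hs1.preimage hf.1)]
    exact hproper.isCompact_preimage hs2
  exact this

section Main

variable {X : Type*} [MetricSpace X]

/-- Separated sets are uniformly bounded in cardinality. -/
lemma sep_card_bound (mc : MetricSpace (OnePoint X))
    (hteq : mc.toUniformSpace.toTopologicalSpace
      = (inferInstance : TopologicalSpace (OnePoint X)))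
    (hdd : ∀ x y : X, mc.dist ↑x ↑y = dist x y)
    (f : X → X) {ε : ℝ} (hε : 0 < ε) :
    ∃ M : ℕ, ∀ n : ℕ, ∀ E : Finset X, IsNSepSet dist f n ε ↑E → E.card ≤ M ^ n := by
  classical
  obtain ⟨s, hs⟩ := mtrans_totallyBounded mc hteq (half_pos hε)
  refine ⟨s.card, fun n E hE => ?_⟩
  have hpick : ∀ x : X, ∃ z ∈ s, mc.dist ↑x z < ε / 2 := fun x => hs ↑x
  choose pz hpz1 hpz2 using hpick
  have hinj : Set.InjOn (fun x => fun j : Fin n => (⟨pz (f^[(j : ℕ)] x), hpz1 _⟩ : {z // z ∈ s})) ↑E := by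
    intro x hx y hy hxy
    by_contra hne
    obtain ⟨j, hj, hjd⟩ := hE x hx y hy hne
    have h1 := hpz2 (f^[j] x)
    have h2 := hpz2 (f^[j] y)
    have heq : pz (f^[j] x) = pz (f^[j] y) := by
      have h' := congrFun hxy (⟨j, hj⟩ : Fin n)
      simpa using congrArg Subtype.val h'
    rw [heq] at h1
    have htri : dist (f^[j] x) (f^[j] y) < ε := by
      rw [← hdd]
      calc mc.dist ↑(f^[j] x) ↑(f^[j] y)
          ≤ mc.dist ↑(f^[j] x) (pz (f^[j] y)) + mc.dist (pz (f^[j] y)) ↑(f^[j] y) :=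
            mc.dist_triangle _ _ _
        _ < ε / 2 + ε / 2 := by
            rw [mc.dist_comm (pz (f^[j] y)) ↑(f^[j] y)]
            exact add_lt_add h1 h2
        _ = ε := by ring
    exact absurd hjd (not_lt.mpr htri.le)
  have := Finset.card_le_card_of_injOn _ (fun x _ => Finset.mem_univ _) hinj
  calc E.card ≤ (Finset.univ : Finset (Fin n → {z // z ∈ s})).card := this
    _ = s.card ^ n := by
        rw [Finset.card_univ, Fintype.card_fun]
        simp

lemma lemmaA [Nonempty X] (mc : MetricSpace (OnePoint X))
    (hteq : mc.toUniformSpace.toTopologicalSpace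
      = (inferInstance : TopologicalSpace (OnePoint X)))
    (hdd : ∀ x y : X, mc.dist ↑x ↑y = dist x y)
    (f : X → X) : cEnt f ≤ dEnt dist f := by
  classical
  refine iSup₂_le fun 𝒰 h𝒰 => ?_
  obtain ⟨x0⟩ := ‹Nonempty X›
  have hx0 : x0 ∈ ⋃₀ 𝒰 := h𝒰.2 ▸ mem_univ x0
  obtain ⟨U0, hU0, -⟩ := hx0
  haveI : Nonempty {U // U ∈ 𝒰} := ⟨⟨U0, hU0⟩⟩
  set c : {U // U ∈ 𝒰} → Set (OnePoint X) :=
    fun U => insert OnePoint.infty ((fun x : X => (x : OnePoint X)) '' U.1) with hc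
  have hpre : ∀ U : {U // U ∈ 𝒰}, ((fun x : X => (x : OnePoint X)) ⁻¹' (c U)) = U.1 := by
    intro U
    ext x
    simp only [hc, mem_preimage, mem_insert_iff, mem_image]
    constructor
    · rintro (hbad | ⟨y, hy, hcast⟩)
      · exact absurd hbad (OnePoint.coe_ne_infty _)
      · exact (OnePoint.coe_injective hcast) ▸ hy
    · intro h; exact Or.inr ⟨x, h, rfl⟩
  have hopen : ∀ U : {U // U ∈ 𝒰}, IsOpen (c U) := by
    intro U
    rw [OnePoint.isOpen_iff_of_mem (mem_insert _ _), hpre]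
    exact ⟨(h𝒰.1 U.1 U.2).1.isClosed_compl, (h𝒰.1 U.1 U.2).2⟩
  have hcov : ∀ z : OnePoint X, ∃ U : {U // U ∈ 𝒰}, z ∈ c U := by
    intro z
    induction z using OnePoint.rec with
    | infty => exact ⟨⟨U0, hU0⟩, mem_insert _ _⟩
    | coe x =>
      have hx : x ∈ ⋃₀ 𝒰 := h𝒰.2 ▸ mem_univ x
      obtain ⟨U, hU, hxU⟩ := hx
      exact ⟨⟨U, hU⟩, mem_insert_of_mem _ ⟨x, hxU, rfl⟩⟩
  obtain ⟨δ, hδpos, hleb⟩ := mtrans_lebesgue mc hteq hopen hcov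
  set ε := δ / 2 with hεdef
  have hεpos : 0 < ε := half_pos hδpos
  obtain ⟨M, hM⟩ := sep_card_bound mc hteq hdd f hεpos
  have key : ∀ n : ℕ, covH (iterJoin f 𝒰 n) ≤ elog (sepCard dist f n ε univ) := by
    intro n
    set T := {k : ℕ | ∃ E : Finset X, IsNSepSet dist f n ε ↑E ∧ E.card = k} with hT
    have hT0 : 0 ∈ T := ⟨∅, by intro a ha; simp at ha, by simp⟩
    have hTb : BddAbove T := ⟨M ^ n, by rintro k ⟨E, hE, rfl⟩; exact hM n E hE⟩
    obtain ⟨E, hEs, hEc⟩ := Nat.sSup_mem ⟨0, hT0⟩ hTb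
    have hspan : ∀ x : X, ∃ y ∈ E, ∀ j < n, dist (f^[j] x) (f^[j] y) ≤ ε := by
      intro x
      by_contra hcon
      push_neg at hcon
      have hxE : x ∉ E := by
        intro hx
        obtain ⟨j, -, hlt⟩ := hcon x hx
        rw [dist_self] at hlt
        exact absurd hlt (not_lt.mpr hεpos.le)
      have hsep' : IsNSepSet dist f n ε ↑(insert x E) := by
        intro a ha b hb hab
        simp only [Finset.coe_insert, Set.mem_insert_iff, Finset.mem_coe] at ha hb
        rcases ha with rfl | ha <;> rcases hb with rfl | hb
        · exact absurd rfl hab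
        · exact hcon b hb
        · obtain ⟨j, hj, h⟩ := hcon a ha
          exact ⟨j, hj, by rwa [dist_comm]⟩
        · exact hEs a ha b hb hab
      have hmem : (insert x E).card ∈ T := ⟨insert x E, hsep', rfl⟩
      have hle := le_csSup hTb hmem
      rw [Finset.card_insert_of_notMem hxE, hEc] at hle
      omega
    have hcell : ∀ y : X, ∃ u : Fin n → {U // U ∈ 𝒰}, ∀ x : X,
        (∀ j < n, dist (f^[j] x) (f^[j] y) ≤ ε) →
        x ∈ ⋂ j : Fin n, f^[(j : ℕ)] ⁻¹' (u j).1 := by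
      intro y
      choose u hu using fun j : Fin n => hleb ((f^[(j : ℕ)] y : X) : OnePoint X)
      refine ⟨u, fun x hx => mem_iInter.mpr fun j => ?_⟩
      have h2 : mc.dist ↑(f^[(j : ℕ)] x) ↑(f^[(j : ℕ)] y) < δ := by
        rw [hdd]
        calc dist (f^[(j : ℕ)] x) (f^[(j : ℕ)] y) ≤ ε := hx _ j.2
          _ < δ := by rw [hεdef]; linarith
      have h3 := hu j _ h2
      rw [mem_preimage]
      rcases h3 with h3 | h3
      · exact absurd h3 (OnePoint.coe_ne_infty _)
      · obtain ⟨z, hz, hcast⟩ := h3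
        exact (OnePoint.coe_injective hcast) ▸ hz
    choose cu hcu using hcell
    set 𝒱 := E.image (fun y => ⋂ j : Fin n, f^[(j : ℕ)] ⁻¹' ((cu y j)).1) with h𝒱
    have h1 : ↑𝒱 ⊆ iterJoin f 𝒰 n := by
      intro W hW
      simp only [h𝒱, Finset.coe_image, mem_image, Finset.mem_coe] at hW
      obtain ⟨y, -, rfl⟩ := hW
      exact ⟨fun j => (cu y j).1, fun j => (cu y j).2, rfl⟩
    have h2 : ⋃₀ (𝒱 : Set (Set X)) = univ := by
      refine eq_univ_of_forall fun x => ?_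
      obtain ⟨y, hyE, hy⟩ := hspan x
      exact ⟨_, Finset.mem_coe.mpr (Finset.mem_image_of_mem _ hyE), hcu y x hy⟩
    have h3 : coverN (iterJoin f 𝒰 n) ≤ E.card := by
      have h3' : coverN (iterJoin f 𝒰 n) ≤ 𝒱.card := by
        unfold coverN
        exact Nat.sInf_le ⟨𝒱, h1, h2, rfl⟩
      exact le_trans h3' Finset.card_image_le
    have h4 : ((E.card : ℕ) : ℝ≥0∞) ≤ sepCard dist f n ε univ := by
      unfold sepCard
      have hprop : (E : Set X) ⊆ univ ∧ IsNSepSet dist f n ε (E : Set X) :=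
        ⟨subset_univ _, hEs⟩
      exact le_iSup₂ (f := fun (F : Finset X)
        (_ : (F : Set X) ⊆ univ ∧ IsNSepSet dist f n ε (F : Set X)) =>
        ((F.card : ℝ≥0∞))) E hprop
    calc covH (iterJoin f 𝒰 n)
        = ENNReal.ofReal (Real.log (coverN (iterJoin f 𝒰 n))) := rfl
      _ ≤ ENNReal.ofReal (Real.log (E.card)) :=
          ofReal_log_mono (Nat.cast_nonneg _) (Nat.cast_le.mpr h3)
      _ = elog ((E.card : ℕ) : ℝ≥0∞) := (elog_natCast _).symm
      _ ≤ elog (sepCard dist f n ε univ) := elog_mono h4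
  have hstep : cEntCover f 𝒰 ≤ sepEntEps dist f ε univ :=
    limsup_le_limsup (Eventually.of_forall fun n => ENNReal.div_le_div_right (key n) _)
  refine hstep.trans ?_
  exact le_iSup₂ (f := fun (ε : ℝ) (_ : 0 < ε) => sepEntEps dist f ε univ) ε hεpos

lemma ev_const_div_le (c d : ℝ≥0∞) (hc : c ≠ ⊤) (hd : 0 < d) :
    ∀ᶠ n : ℕ in atTop, c / ↑n ≤ d := by
  rcases eq_or_ne d ⊤ with rfl | hdt
  · exact Eventually.of_forall fun n => le_top
  · filter_upwards [eventually_ge_atTop (⌈(c / d).toReal⌉₊ + 1)] with n hn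
    have hdivne : c / d ≠ ⊤ := (ENNReal.div_lt_top hc hd.ne').ne
    have h1 : c / d ≤ (n : ℝ≥0∞) := by
      calc c / d = ENNReal.ofReal ((c / d).toReal) := (ENNReal.ofReal_toReal hdivne).symm
        _ ≤ ENNReal.ofReal ((⌈(c / d).toReal⌉₊ + 1 : ℕ) : ℝ) := by
            refine ENNReal.ofReal_le_ofReal ?_
            push_cast
            have := Nat.le_ceil ((c / d).toReal)
            linarith
        _ = ((⌈(c / d).toReal⌉₊ + 1 : ℕ) : ℝ≥0∞) := ENNReal.ofReal_natCast _
        _ ≤ (n : ℝ≥0∞) := Nat.cast_le.mpr hn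
    have h2 : c ≤ d * n := by
      have h3 := mul_le_mul_right h1 d
      rwa [ENNReal.mul_div_cancel hd.ne' hdt] at h3
    exact ENNReal.div_le_of_le_mul h2

lemma lemmaB [Nonempty X] (mc : MetricSpace (OnePoint X))
    (hteq : mc.toUniformSpace.toTopologicalSpace
      = (inferInstance : TopologicalSpace (OnePoint X)))
    (hdd : ∀ x y : X, mc.dist ↑x ↑y = dist x y)
    (f : X → X) (hf : IsPerfectMap f) : dEnt dist f ≤ cEnt f := by
  classical
  refine iSup₂_le fun ε hε => ?_
  -- uniform continuity of f
  have hcont := continuous_onePointExtend f hf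
  have hUC : ∀ α : ℝ, 0 < α → ∃ β > 0, ∀ x y : X, dist x y < β → dist (f x) (f y) < α := by
    intro α hα
    obtain ⟨β, hβ, H⟩ := mtrans_unifCont mc hteq hcont hα
    refine ⟨β, hβ, fun x y h => ?_⟩
    have h2 := H (↑x) (↑y) (by rw [hdd]; exact h)
    have h3 : mc.dist ↑(f x) ↑(f y) < α := h2
    rwa [hdd] at h3
  -- iterated uniform continuity
  have hIter : ∀ m : ℕ, ∃ β > 0, ∀ x y : X, dist x y < β →
      ∀ r ≤ m, dist (f^[r] x) (f^[r] y) < ε := by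
    intro m
    induction m with
    | zero =>
      refine ⟨ε, hε, fun x y h r hr => ?_⟩
      rw [Nat.le_zero.mp hr]
      simpa using h
    | succ m ih =>
      obtain ⟨βm, hβm, Hm⟩ := ih
      obtain ⟨β, hβ, H⟩ := hUC βm hβm
      refine ⟨min β βm, lt_min hβ hβm, fun x y h r hr => ?_⟩
      cases r with
      | zero => exact Hm x y (lt_of_lt_of_le h (min_le_right _ _)) 0 (Nat.zero_le _)
      | succ r =>
        rw [Function.iterate_succ_apply, Function.iterate_succ_apply]
        exact Hm (f x) (f y) (H x y (lt_of_lt_of_le h (min_le_left _ _))) r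
          (Nat.succ_le_succ_iff.mp hr)
  -- the per-m bound
  have hmain : ∀ m : ℕ, 0 < m →
      sepEntEps dist f ε univ ≤ ENNReal.ofReal (Real.log 2) / (m : ℝ≥0∞) + cEnt f := by
    intro m hm
    obtain ⟨ε', hε'pos, hε'⟩ := hIter (m - 1)
    set r0 := ε' / 3 with hr0def
    have hr0pos : 0 < r0 := by positivity
    -- the co-compact cover
    set Vt : Set (OnePoint X) := {z : OnePoint X | mc.dist z OnePoint.infty < r0} with hVt
    have hVtopen : IsOpen Vt := mtrans_isOpen_ball mc hteq _ _
    have hinftyVt : OnePoint.infty ∈ Vt := by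
      simp only [hVt, mem_setOf_eq, mc.dist_self]
      exact hr0pos
    set V : Set X := (fun x : X => (x : OnePoint X)) ⁻¹' Vt with hV
    have hVopen : IsOpen V := hVtopen.preimage OnePoint.continuous_coe
    have hVcompl : IsCompact Vᶜ := by
      have := (OnePoint.isOpen_iff_of_mem' hinftyVt).mp hVtopen
      exact this.1
    obtain ⟨s, hs⟩ := mtrans_totallyBounded mc hteq hr0pos
    set A : OnePoint X → Set X := fun w => (fun x : X => (x : OnePoint X)) ⁻¹' {z | mc.dist z w < r0}
      with hA
    have hAopen : ∀ w, IsOpen (A w) :=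
      fun w => (mtrans_isOpen_ball mc hteq w r0).preimage OnePoint.continuous_coe
    set 𝒰 : Set (Set X) := (fun w => A w ∪ V) '' ↑s with h𝒰def
    have hpick : ∀ x : X, ∃ w ∈ s, mc.dist ↑x w < r0 := fun x => hs ↑x
    choose pw hpw1 hpw2 using hpick
    have h𝒰 : IsCoCompactCover 𝒰 := by
      constructor
      · rintro U ⟨w, -, rfl⟩
        refine ⟨(hAopen w).union hVopen, ?_⟩
        refine IsCompact.of_isClosed_subset hVcompl
          ((hAopen w).union hVopen).isClosed_compl ?_
        rw [compl_subset_compl]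
        exact subset_union_right
      · refine eq_univ_of_forall fun x => ?_
        exact ⟨A (pw x) ∪ V, ⟨pw x, Finset.mem_coe.mpr (hpw1 x), rfl⟩, Or.inl (hpw2 x)⟩
    have hL : cEntCover f 𝒰 ≤ cEnt f := by
      unfold cEnt
      exact le_iSup₂ (f := fun (W : Set (Set X)) (_ : IsCoCompactCover W) => cEntCover f W) 𝒰 h𝒰
    rcases eq_or_ne (cEntCover f 𝒰) ⊤ with htop | hfin
    · have : cEnt f = ⊤ := top_le_iff.mp (htop ▸ hL)
      rw [this]
      exact le_top.trans (le_add_self)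
    -- minimal subcovers exist
    obtain ⟨x0⟩ := ‹Nonempty X›
    have hSne : ∀ J : ℕ, ∃ 𝒱 : Finset (Set X), ↑𝒱 ⊆ iterJoin f 𝒰 J ∧
        ⋃₀ (𝒱 : Set (Set X)) = univ ∧ 𝒱.card = coverN (iterJoin f 𝒰 J) := by
      intro J
      have hfull : ∃ 𝒱 : Finset (Set X), ↑𝒱 ⊆ iterJoin f 𝒰 J ∧
          ⋃₀ (𝒱 : Set (Set X)) = univ := by
        refine ⟨(Finset.univ : Finset (Fin J → {w // w ∈ s})).image
          (fun t => ⋂ j : Fin J, f^[(j : ℕ)] ⁻¹' (A (t j) ∪ V)), ?_, ?_⟩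
        · intro W hW
          simp only [Finset.coe_image, mem_image, Finset.mem_coe] at hW
          obtain ⟨t, -, rfl⟩ := hW
          exact ⟨fun j => A (t j) ∪ V, fun j => ⟨(t j).1, Finset.mem_coe.mpr (t j).2, rfl⟩, rfl⟩
        · refine eq_univ_of_forall fun x => ?_
          refine ⟨_, Finset.mem_coe.mpr (Finset.mem_image_of_mem _
            (Finset.mem_univ (fun j : Fin J => (⟨pw (f^[(j : ℕ)] x), hpw1 _⟩ : {w // w ∈ s})))),
            ?_⟩
          exact mem_iInter.mpr fun j => mem_preimage.mpr (Or.inl (hpw2 (f^[(j : ℕ)] x)))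
      obtain ⟨𝒱₀, h1, h2⟩ := hfull
      have hne : {k | ∃ 𝒱 : Finset (Set X), ↑𝒱 ⊆ iterJoin f 𝒰 J ∧
          ⋃₀ (𝒱 : Set (Set X)) = univ ∧ 𝒱.card = k}.Nonempty := ⟨𝒱₀.card, 𝒱₀, h1, h2, rfl⟩
      obtain ⟨𝒱, h1', h2', h3'⟩ := Nat.sInf_mem hne
      exact ⟨𝒱, h1', h2', h3'⟩
    have hN1 : ∀ J : ℕ, 1 ≤ coverN (iterJoin f 𝒰 J) := by
      intro J
      obtain ⟨𝒱, -, h2', h3'⟩ := hSne J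
      rcases Nat.eq_zero_or_pos 𝒱.card with hc | hc
      · rw [Finset.card_eq_zero.mp hc] at h2'
        simp only [Finset.coe_empty, sUnion_empty] at h2'
        exact absurd (h2' ▸ mem_univ x0) (notMem_empty x0)
      · omega
    -- the key counting estimate
    have hcount : ∀ (K : ℕ) (E : Finset X), IsNSepSet dist f (K * m) ε ↑E →
        E.card ≤ 2 ^ K * coverN (iterJoin f 𝒰 (K * m)) := by
      intro K E hE
      obtain ⟨𝒱, hV1, hV2, hV3⟩ := hSne (K * m)
      have hgsep : ∀ x ∈ E, ∀ y ∈ E, x ≠ y →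
          ∃ q < K, ¬ dist (f^[m * q] x) (f^[m * q] y) < ε' := by
        intro x hx y hy hxy
        by_contra hcon
        push_neg at hcon
        obtain ⟨j, hj, hsepj⟩ := hE x (Finset.mem_coe.mpr hx) y (Finset.mem_coe.mpr hy) hxy
        have hq : j / m < K := (Nat.div_lt_iff_lt_mul hm).mpr hj
        have hdq := hcon (j / m) hq
        have hrm : j % m ≤ m - 1 := (Nat.lt_iff_le_pred hm).mp (Nat.mod_lt j hm)
        have hclose := hε' _ _ hdq (j % m) hrm
        rw [← Function.iterate_add_apply, ← Function.iterate_add_apply,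
          Nat.mod_add_div j m] at hclose
        exact absurd hsepj (not_lt.mpr hclose.le)
      have hcell : ∀ C ∈ 𝒱, (E.filter (fun x => x ∈ C)).card ≤ 2 ^ K := by
        intro C hC
        obtain ⟨u, hu, rfl⟩ := hV1 (Finset.mem_coe.mpr hC)
        have hinj : Set.InjOn (fun x => fun q : Fin K => (f^[m * (q : ℕ)] x ∈ V : Prop))
            ↑(E.filter (fun x => x ∈ ⋂ i : Fin (K * m), f^[(i : ℕ)] ⁻¹' u i)) := by
          intro x hx y hy hpat
          by_contra hne
          simp only [Finset.coe_filter, mem_setOf_eq] at hx hy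
          obtain ⟨q, hq, hfar⟩ := hgsep x hx.1 y hy.1 hne
          have hqm : m * q < K * m := by
            calc m * q < m * K := (Nat.mul_lt_mul_left hm).mpr hq
              _ = K * m := Nat.mul_comm m K
          set i0 : Fin (K * m) := ⟨m * q, hqm⟩ with hi0
          have hxC : f^[m * q] x ∈ u i0 := mem_preimage.mp (mem_iInter.mp hx.2 i0)
          have hyC : f^[m * q] y ∈ u i0 := mem_preimage.mp (mem_iInter.mp hy.2 i0)
          have hpq : (f^[m * q] x ∈ V : Prop) = (f^[m * q] y ∈ V : Prop) := by
            have := congrFun hpat (⟨q, hq⟩ : Fin K)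
            simpa using this
          obtain ⟨w, -, hw⟩ := hu i0
          apply hfar
          by_cases hxV : f^[m * q] x ∈ V
          · have hyV : f^[m * q] y ∈ V := hpq ▸ hxV
            have h1 : mc.dist ↑(f^[m * q] x) OnePoint.infty < r0 := hxV
            have h2 : mc.dist ↑(f^[m * q] y) OnePoint.infty < r0 := hyV
            rw [← hdd]
            calc mc.dist ↑(f^[m * q] x) ↑(f^[m * q] y)
                ≤ mc.dist ↑(f^[m * q] x) OnePoint.infty
                  + mc.dist OnePoint.infty ↑(f^[m * q] y) := mc.dist_triangle _ _ _
              _ < r0 + r0 := by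
                  rw [mc.dist_comm OnePoint.infty]
                  exact add_lt_add h1 h2
              _ ≤ ε' := by rw [hr0def]; linarith
          · have hyV : f^[m * q] y ∉ V := fun hyy => hxV (hpq ▸ hyy)
            have hxC' : f^[m * q] x ∈ A w ∪ V := by
              have h := hxC; rw [← hw] at h; exact h
            have hyC' : f^[m * q] y ∈ A w ∪ V := by
              have h := hyC; rw [← hw] at h; exact h
            have hxA : f^[m * q] x ∈ A w := by
              rcases hxC' with h | h
              · exact h
              · exact absurd h hxV
            have hyA : f^[m * q] y ∈ A w := by
              rcases hyC' with h | h
              · exact h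
              · exact absurd h hyV
            have h1 : mc.dist ↑(f^[m * q] x) w < r0 := hxA
            have h2 : mc.dist ↑(f^[m * q] y) w < r0 := hyA
            rw [← hdd]
            calc mc.dist ↑(f^[m * q] x) ↑(f^[m * q] y)
                ≤ mc.dist ↑(f^[m * q] x) w + mc.dist w ↑(f^[m * q] y) := mc.dist_triangle _ _ _
              _ < r0 + r0 := by
                  rw [mc.dist_comm w]
                  exact add_lt_add h1 h2
              _ ≤ ε' := by rw [hr0def]; linarith
        have hcard := Finset.card_le_card_of_injOn _
          (fun a _ => Finset.mem_univ (fun q : Fin K => (f^[m * (q : ℕ)] a ∈ V : Prop))) hinj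
        calc (E.filter (fun x => x ∈ ⋂ i : Fin (K * m), f^[(i : ℕ)] ⁻¹' u i)).card
            ≤ (Finset.univ : Finset (Fin K → Prop)).card := hcard
          _ = 2 ^ K := by
              rw [Finset.card_univ, Fintype.card_fun]
              simp
      have hsub : E ⊆ 𝒱.biUnion (fun C => E.filter (fun x => x ∈ C)) := by
        intro x hx
        have hxu : x ∈ ⋃₀ (𝒱 : Set (Set X)) := hV2 ▸ mem_univ x
        obtain ⟨C, hC, hxC⟩ := hxu
        exact Finset.mem_biUnion.mpr ⟨C, Finset.mem_coe.mp hC, Finset.mem_filter.mpr ⟨hx, hxC⟩⟩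
      calc E.card ≤ (𝒱.biUnion (fun C => E.filter (fun x => x ∈ C))).card :=
            Finset.card_le_card hsub
        _ ≤ ∑ C ∈ 𝒱, (E.filter (fun x => x ∈ C)).card := Finset.card_biUnion_le
        _ ≤ ∑ _C ∈ 𝒱, 2 ^ K := Finset.sum_le_sum hcell
        _ = 𝒱.card * 2 ^ K := by rw [Finset.sum_const, smul_eq_mul]
        _ = 2 ^ K * coverN (iterJoin f 𝒰 (K * m)) := by rw [hV3, Nat.mul_comm]
    -- notation for the limsup part
    set L2 : ℝ≥0∞ := ENNReal.ofReal (Real.log 2) with hL2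
    set L : ℝ≥0∞ := cEntCover f 𝒰 with hLdef
    have hL2ne : L2 ≠ ⊤ := ENNReal.ofReal_ne_top
    -- per-n term bound
    have hterm : ∀ n : ℕ, elog (sepCard dist f n ε univ) ≤
        ((n / m + 1 : ℕ) : ℝ≥0∞) * L2 + covH (iterJoin f 𝒰 ((n / m + 1) * m)) := by
      intro n
      set K := n / m + 1 with hK
      have hnJ : n < K * m := (Nat.div_lt_iff_lt_mul hm).mp (Nat.lt_succ_self _)
      set N := coverN (iterJoin f 𝒰 (K * m)) with hN
      have hNge : 1 ≤ N := hN1 _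
      have hsc : sepCard dist f n ε univ ≤ ((2 ^ K * N : ℕ) : ℝ≥0∞) := by
        unfold sepCard
        refine iSup₂_le fun F hF => ?_
        refine Nat.cast_le.mpr (hcount K F ?_)
        intro x hx y hy hxy
        obtain ⟨j, hj, hsepj⟩ := hF.2 x hx y hy hxy
        exact ⟨j, lt_trans hj hnJ, hsepj⟩
      calc elog (sepCard dist f n ε univ) ≤ elog ((2 ^ K * N : ℕ) : ℝ≥0∞) := elog_mono hsc
        _ = ENNReal.ofReal (Real.log ((2 ^ K * N : ℕ) : ℝ)) := elog_natCast _
        _ = ENNReal.ofReal ((K : ℝ) * Real.log 2 + Real.log (N : ℝ)) := by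
            congr 1
            push_cast
            rw [Real.log_mul (by positivity) (by
              have : (0 : ℝ) < (N : ℝ) := by exact_mod_cast hNge
              positivity), Real.log_pow]
        _ = (K : ℝ≥0∞) * L2 + covH (iterJoin f 𝒰 (K * m)) := by
            rw [ENNReal.ofReal_add (by positivity) (Real.log_nonneg (by exact_mod_cast hNge)),
              ENNReal.ofReal_mul (Nat.cast_nonneg K), ENNReal.ofReal_natCast]
            rfl
    -- final limsup estimate
    refine le_trans ?_ (add_le_add_right hL _)
    refine ENNReal.le_of_forall_pos_le_add fun η hη hbfin => ?_
    set η3 : ℝ≥0∞ := (η : ℝ≥0∞) / 3 with hη3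
    have hη30 : 0 < η3 := ENNReal.div_pos (by exact_mod_cast hη.ne') (by norm_num)
    have hη3t : η3 ≠ ⊤ := by
      refine (ENNReal.div_lt_top ENNReal.coe_ne_top (by norm_num)).ne
    have hlimlt : Filter.atTop.limsup (fun j : ℕ => covH (iterJoin f 𝒰 j) / (j : ℝ≥0∞))
        < L + η3 := by
      have : L < L + η3 := ENNReal.lt_add_right hfin hη30.ne'
      exact this
    have hevCov := Filter.eventually_lt_of_limsup_lt hlimlt
    obtain ⟨j0, hj0⟩ := eventually_atTop.mp hevCov
    have hLη3t : L + η3 ≠ ⊤ := ENNReal.add_ne_top.mpr ⟨hfin, hη3t⟩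
    have hbig : ∀ᶠ n : ℕ in atTop,
        elog (sepCard dist f n ε univ) / (n : ℝ≥0∞) ≤ L2 / (m : ℝ≥0∞) + L + (η3 + η3 + η3) := by
      filter_upwards [ev_const_div_le L2 η3 hL2ne hη30,
        ev_const_div_le ((L + η3) * m) η3
          (ENNReal.mul_ne_top hLη3t (ENNReal.natCast_ne_top m)) hη30,
        eventually_ge_atTop (j0 + 1)] with n hn3 hn4 hn
      have hn1 : 1 ≤ n := by omega
      have hn0 : (n : ℝ≥0∞) ≠ 0 := by exact_mod_cast Nat.one_le_iff_ne_zero.mp hn1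
      have hnt : (n : ℝ≥0∞) ≠ ⊤ := ENNReal.natCast_ne_top n
      have hm0 : (m : ℝ≥0∞) ≠ 0 := by exact_mod_cast hm.ne'
      have hmt : (m : ℝ≥0∞) ≠ ⊤ := ENNReal.natCast_ne_top m
      set K := n / m + 1 with hK
      set J := K * m with hJ
      have hnJ : n < J := (Nat.div_lt_iff_lt_mul hm).mp (Nat.lt_succ_self _)
      have hJn : (J : ℕ) ≤ n + m := by
        have := Nat.div_mul_le_self n m
        simp only [hJ, hK]
        calc (n / m + 1) * m = n / m * m + m := by ring
          _ ≤ n + m := by omega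
      have hA1 : elog (sepCard dist f n ε univ) / (n : ℝ≥0∞)
          ≤ ((K : ℝ≥0∞) * L2 + covH (iterJoin f 𝒰 J)) / (n : ℝ≥0∞) :=
        ENNReal.div_le_div_right (hterm n) _
      have hKc : (K : ℝ≥0∞) ≤ (n : ℝ≥0∞) / (m : ℝ≥0∞) + 1 := by
        have hstep : ((n / m : ℕ) : ℝ≥0∞) ≤ (n : ℝ≥0∞) / (m : ℝ≥0∞) := by
          rw [ENNReal.le_div_iff_mul_le (Or.inl hm0) (Or.inl hmt)]
          have : ((n / m : ℕ) : ℝ≥0∞) * (m : ℝ≥0∞) = ((n / m * m : ℕ) : ℝ≥0∞) := by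
            push_cast; ring
          rw [this]
          exact_mod_cast Nat.div_mul_le_self n m
        calc (K : ℝ≥0∞) = ((n / m : ℕ) : ℝ≥0∞) + 1 := by rw [hK]; push_cast; ring
          _ ≤ (n : ℝ≥0∞) / (m : ℝ≥0∞) + 1 := add_le_add_left hstep 1
      have hdivn : ((n : ℝ≥0∞) / (m : ℝ≥0∞)) / (n : ℝ≥0∞) = 1 / (m : ℝ≥0∞) := by
        rw [div_eq_mul_inv (n : ℝ≥0∞) (m : ℝ≥0∞), div_eq_mul_inv]
        calc (n : ℝ≥0∞) * (m : ℝ≥0∞)⁻¹ * (n : ℝ≥0∞)⁻¹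
            = (m : ℝ≥0∞)⁻¹ * ((n : ℝ≥0∞) * (n : ℝ≥0∞)⁻¹) := by ring
          _ = (m : ℝ≥0∞)⁻¹ := by rw [ENNReal.mul_inv_cancel hn0 hnt, mul_one]
          _ = 1 / (m : ℝ≥0∞) := (one_div _).symm
      have hA3 : ((K : ℝ≥0∞) * L2) / (n : ℝ≥0∞) ≤ L2 / (m : ℝ≥0∞) + η3 := by
        have a2 : (K : ℝ≥0∞) * L2 ≤ ((n : ℝ≥0∞) / (m : ℝ≥0∞)) * L2 + L2 := by
          calc (K : ℝ≥0∞) * L2 ≤ ((n : ℝ≥0∞) / (m : ℝ≥0∞) + 1) * L2 :=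
                mul_le_mul_left hKc L2
            _ = ((n : ℝ≥0∞) / (m : ℝ≥0∞)) * L2 + L2 := by rw [add_mul, one_mul]
        calc ((K : ℝ≥0∞) * L2) / (n : ℝ≥0∞)
            ≤ (((n : ℝ≥0∞) / (m : ℝ≥0∞)) * L2 + L2) / (n : ℝ≥0∞) :=
              ENNReal.div_le_div_right a2 _
          _ = (((n : ℝ≥0∞) / (m : ℝ≥0∞)) * L2) / (n : ℝ≥0∞) + L2 / (n : ℝ≥0∞) :=
              ENNReal.add_div
          _ = L2 * (((n : ℝ≥0∞) / (m : ℝ≥0∞)) / (n : ℝ≥0∞)) + L2 / (n : ℝ≥0∞) := by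
              rw [mul_comm ((n : ℝ≥0∞) / (m : ℝ≥0∞)) L2, mul_div_assoc]
          _ = L2 / (m : ℝ≥0∞) + L2 / (n : ℝ≥0∞) := by
              rw [hdivn, mul_one_div]
          _ ≤ L2 / (m : ℝ≥0∞) + η3 := add_le_add_right hn3 _
      have hb1 : covH (iterJoin f 𝒰 J) ≤ (L + η3) * (J : ℝ≥0∞) := by
        have hJ0 : j0 ≤ J := by omega
        have hJne : (J : ℝ≥0∞) ≠ 0 := by
          have : 1 ≤ J := le_trans hn1 hnJ.le
          exact_mod_cast Nat.one_le_iff_ne_zero.mp this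
        have := (hj0 J hJ0).le
        rwa [ENNReal.div_le_iff_le_mul (Or.inl hJne) (Or.inl (ENNReal.natCast_ne_top J))]
          at this
      have hA4 : covH (iterJoin f 𝒰 J) / (n : ℝ≥0∞) ≤ (L + η3) + η3 := by
        have hb2 : (J : ℝ≥0∞) ≤ (n : ℝ≥0∞) + (m : ℝ≥0∞) := by
          exact_mod_cast hJn
        calc covH (iterJoin f 𝒰 J) / (n : ℝ≥0∞)
            ≤ ((L + η3) * ((n : ℝ≥0∞) + (m : ℝ≥0∞))) / (n : ℝ≥0∞) :=
              ENNReal.div_le_div_right (hb1.trans (mul_le_mul_right hb2 _)) _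
          _ = ((L + η3) * (n : ℝ≥0∞)) / (n : ℝ≥0∞)
              + ((L + η3) * (m : ℝ≥0∞)) / (n : ℝ≥0∞) := by
              rw [mul_add, ENNReal.add_div]
          _ = (L + η3) + ((L + η3) * (m : ℝ≥0∞)) / (n : ℝ≥0∞) := by
              rw [mul_div_assoc, ENNReal.div_self hn0 hnt, mul_one]
          _ ≤ (L + η3) + η3 := add_le_add_right hn4 _
      calc elog (sepCard dist f n ε univ) / (n : ℝ≥0∞)
          ≤ ((K : ℝ≥0∞) * L2 + covH (iterJoin f 𝒰 J)) / (n : ℝ≥0∞) := hA1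
        _ = ((K : ℝ≥0∞) * L2) / (n : ℝ≥0∞) + covH (iterJoin f 𝒰 J) / (n : ℝ≥0∞) :=
            ENNReal.add_div
        _ ≤ (L2 / (m : ℝ≥0∞) + η3) + ((L + η3) + η3) := add_le_add hA3 hA4
        _ = L2 / (m : ℝ≥0∞) + L + (η3 + η3 + η3) := by ring
    have h3η : η3 + η3 + η3 = (η : ℝ≥0∞) := by
      rw [hη3, ENNReal.div_add_div_same, ENNReal.div_add_div_same]
      have : (η : ℝ≥0∞) + (η : ℝ≥0∞) + (η : ℝ≥0∞) = 3 * (η : ℝ≥0∞) := by ring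
      rw [this, mul_comm, mul_div_assoc, ENNReal.div_self (by norm_num) (by norm_num), mul_one]
    have hfinal : sepEntEps dist f ε univ ≤ L2 / (m : ℝ≥0∞) + L + (η3 + η3 + η3) :=
      Filter.limsup_le_of_le (by isBoundedDefault) hbig
    rw [h3η] at hfinal
    calc sepEntEps dist f ε univ ≤ L2 / (m : ℝ≥0∞) + L + (η : ℝ≥0∞) := hfinal
      _ = L2 / (m : ℝ≥0∞) + L + η := rfl
  -- conclude: let m → ∞
  rcases eq_or_ne (cEnt f) ⊤ with htop | hfin
  · rw [htop]; exact le_top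
  refine ENNReal.le_of_forall_pos_le_add fun η hη hbfin => ?_
  have hev := ev_const_div_le (ENNReal.ofReal (Real.log 2)) ((η : ℝ≥0∞))
    ENNReal.ofReal_ne_top (by exact_mod_cast hη)
  obtain ⟨m, hm1, hm2⟩ := (hev.and (eventually_ge_atTop 1)).exists
  calc sepEntEps dist f ε univ
      ≤ ENNReal.ofReal (Real.log 2) / (m : ℝ≥0∞) + cEnt f := hmain m hm2
    _ ≤ (η : ℝ≥0∞) + cEnt f := add_le_add_left hm1 _
    _ = cEnt f + η := add_comm _ _

end Main

end AuxLemmas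

/-- For a perfect map `f` on a locally compact separable metric space whose metric
is of compact type, the `d`-entropy equals the co-compact entropy: `h^d(f) = c(f)`. -/
theorem dEnt_eq_cEnt {X : Type*} [MetricSpace X] [LocallyCompactSpace X]
    [TopologicalSpace.SeparableSpace X]
    (hd : IsCompactTypeMetric (X := X) ‹MetricSpace X›)
    (f : X → X) (hf : IsPerfectMap f) :
    dEnt dist f = cEnt f := by
  obtain ⟨mc, hteq, hdd⟩ := hd
  have hdd' : ∀ x y : X, mc.dist ↑x ↑y = dist x y := hdd
  cases isEmpty_or_nonempty X with
  | inl hempty =>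
    have huniv : (univ : Set X) = ∅ := Set.univ_eq_empty_iff.mpr hempty
    have helog0 : elog 0 = 0 := by simp [elog]
    have hd0 : dEnt dist f = 0 := by
      have hsc : ∀ (n : ℕ) (ε' : ℝ), sepCard dist f n ε' univ = 0 := by
        intro n ε'
        refine le_antisymm ?_ zero_le
        unfold sepCard
        refine iSup₂_le fun E _ => ?_
        have : E = ∅ := Finset.eq_empty_of_isEmpty E
        simp [this]
      unfold dEnt sepEnt
      refine le_antisymm (iSup₂_le fun ε' _ => ?_) zero_le
      unfold sepEntEps
      have : (fun n : ℕ => elog (sepCard dist f n ε' univ) / (n : ℝ≥0∞))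
          = fun _ : ℕ => 0 := by
        funext n
        rw [hsc, helog0, ENNReal.zero_div]
      rw [this, limsup_const]
    have hc0 : cEnt f = 0 := by
      unfold cEnt
      refine le_antisymm (iSup₂_le fun 𝒰 _ => ?_) zero_le
      have hcov0 : ∀ n : ℕ, coverN (iterJoin f 𝒰 n) = 0 := by
        intro n
        refine Nat.eq_zero_of_le_zero ?_
        unfold coverN
        refine Nat.sInf_le ?_
        exact ⟨∅, by simp, by simp [huniv], rfl⟩
      unfold cEntCover
      have : (fun n : ℕ => covH (iterJoin f 𝒰 n) / (n : ℝ≥0∞)) = fun _ : ℕ => 0 := by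
        funext n
        rw [covH, hcov0]
        simp
      rw [this, limsup_const]
    rw [hd0, hc0]
  | inr hne =>
    exact le_antisymm (lemmaB mc hteq hdd' f hf) (lemmaA mc hteq hdd' f)
end

section
/- Let X be a locally compact separable metric space, f : X → X a perfect mapping, and d a metric of compact type on X with extension d̃ to the one-point compactification X̃. Let f̃ : X̃ → X̃ be the extension of f to X̃ fixing the point at infinity. Then h^d(f) = h^{d̃}(f̃), and furthermore c(f) = c(f̃). -/
open Set Filter Topology ENNReal

section AuxEntropy

open OnePoint

variable {X : Type*}

lemma auxOPE_infty (f : X → X) : onePointExtend f (∞ : OnePoint X) = (∞ : OnePoint X) := rfl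

lemma auxOPE_coe (f : X → X) (x : X) : onePointExtend f (↑x : OnePoint X) = ↑(f x) := rfl

lemma auxOPE_iter_coe (f : X → X) (j : ℕ) (x : X) :
    (onePointExtend f)^[j] (↑x : OnePoint X) = ↑(f^[j] x) := by
  induction j generalizing x with
  | zero => rfl
  | succ n ih =>
      rw [Function.iterate_succ_apply, Function.iterate_succ_apply, auxOPE_coe, ih]

lemma auxOPE_iter_infty (f : X → X) (j : ℕ) : (onePointExtend f)^[j] (∞ : OnePoint X) = (∞ : OnePoint X) := by
  induction j with
  | zero => rfl
  | succ n ih => rw [Function.iterate_succ_apply, auxOPE_infty, ih]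

lemma aux_elog_mono : Monotone (elog) := by
  intro x y hxy
  unfold elog
  rcases eq_or_ne y ⊤ with rfl | hy
  · split <;> simp
  have hx : x ≠ ⊤ := fun h => hy (top_le_iff.mp (h ▸ hxy))
  rw [if_neg hx, if_neg hy]
  rcases eq_or_ne x.toReal 0 with h0 | h0
  · simp [h0]
  · exact ENNReal.ofReal_le_ofReal (Real.log_le_log
      (lt_of_le_of_ne ENNReal.toReal_nonneg (Ne.symm h0))
      ((ENNReal.toReal_le_toReal hx hy).mpr hxy))

lemma aux_elog_two : elog (2 : ℝ≥0∞) = ENNReal.ofReal (Real.log 2) := by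
  rw [elog, if_neg (by simp)]
  norm_num

lemma aux_elog_add_one_le (x : ℝ≥0∞) :
    elog (x + 1) ≤ elog x + ENNReal.ofReal (Real.log 2) := by
  rcases eq_or_ne x ⊤ with rfl | hx
  · simp [elog]
  have hx1 : x + 1 ≠ ⊤ := by simp [hx]
  rcases le_or_gt x 1 with h1 | h1
  · have h2 : elog (x + 1) ≤ elog 2 := aux_elog_mono (by
      calc x + 1 ≤ 1 + 1 := add_le_add_left h1 1
        _ = 2 := one_add_one_eq_two)
    exact h2.trans (aux_elog_two ▸ le_add_self)
  · have hx0 : (1:ℝ) < x.toReal := by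
      have := (ENNReal.toReal_lt_toReal (by simp) hx).mpr h1
      simpa using this
    rw [elog, if_neg hx1, elog, if_neg hx]
    have htr : (x + 1).toReal = x.toReal + 1 := by
      rw [ENNReal.toReal_add hx (by simp), ENNReal.toReal_one]
    have hlog : Real.log ((x+1).toReal) ≤ Real.log 2 + Real.log x.toReal := by
      rw [htr, ← Real.log_mul (by norm_num) (by linarith)]
      exact Real.log_le_log (by linarith) (by nlinarith)
    calc ENNReal.ofReal (Real.log ((x+1).toReal))
        ≤ ENNReal.ofReal (Real.log 2 + Real.log x.toReal) := ENNReal.ofReal_le_ofReal hlog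
      _ ≤ ENNReal.ofReal (Real.log 2) + ENNReal.ofReal (Real.log x.toReal) :=
          ENNReal.ofReal_add_le
      _ = ENNReal.ofReal (Real.log x.toReal) + ENNReal.ofReal (Real.log 2) := add_comm _ _

end AuxEntropy
section AuxPart1

open OnePoint

variable {X : Type*}

lemma aux_sepCard_le (d' : OnePoint X → OnePoint X → ℝ) (d : X → X → ℝ)
    (hext : ∀ x y : X, d' ↑x ↑y = d x y) (f : X → X) (n : ℕ) (ε : ℝ) :
    sepCard d f n ε Set.univ ≤ sepCard d' (onePointExtend f) n ε Set.univ := by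
  classical
  refine iSup₂_le fun E hE => ?_
  refine le_iSup₂_of_le (E.image (OnePoint.some : X → OnePoint X)) ⟨Set.subset_univ _, ?_⟩ ?_
  · rintro p hp q hq hpq
    simp only [Finset.coe_image, Set.mem_image, Finset.mem_coe] at hp hq
    obtain ⟨x, hx, rfl⟩ := hp
    obtain ⟨y, hy, rfl⟩ := hq
    have hxy : x ≠ y := fun h => hpq (by rw [h])
    obtain ⟨j, hj, hd⟩ := hE.2 x (Finset.mem_coe.mpr hx) y (Finset.mem_coe.mpr hy) hxy
    exact ⟨j, hj, by rwa [auxOPE_iter_coe, auxOPE_iter_coe, hext]⟩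
  · exact le_of_eq (by rw [Finset.card_image_of_injective _ OnePoint.coe_injective])

lemma aux_sepCard_ge (d' : OnePoint X → OnePoint X → ℝ) (d : X → X → ℝ)
    (hext : ∀ x y : X, d' ↑x ↑y = d x y) (f : X → X) (n : ℕ) (ε : ℝ) :
    sepCard d' (onePointExtend f) n ε Set.univ ≤ sepCard d f n ε Set.univ + 1 := by
  refine iSup₂_le fun E' hE' => ?_
  classical
  set E : Finset X := E'.preimage (OnePoint.some : X → OnePoint X) (OnePoint.coe_injective.injOn) with hEdef
  have hmem : ∀ x : X, x ∈ E ↔ (↑x : OnePoint X) ∈ E' := fun x => Finset.mem_preimage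
  have hsep : IsNSepSet d f n ε ↑E := by
    intro x hx y hy hxy
    obtain ⟨j, hj, hd⟩ := hE'.2 (↑x) (Finset.mem_coe.mpr ((hmem x).mp (Finset.mem_coe.mp hx)))
      (↑y) (Finset.mem_coe.mpr ((hmem y).mp (Finset.mem_coe.mp hy)))
      (fun h => hxy (OnePoint.coe_injective h))
    exact ⟨j, hj, by rwa [auxOPE_iter_coe, auxOPE_iter_coe, hext] at hd⟩
  have hcard : E'.card ≤ E.card + 1 := by
    have hsub : E' ⊆ insert (∞ : OnePoint X) (E.image (OnePoint.some : X → OnePoint X)) := by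
      intro p hp
      induction p using OnePoint.rec with
      | infty => exact Finset.mem_insert_self _ _
      | coe x => exact Finset.mem_insert_of_mem (Finset.mem_image_of_mem _ ((hmem x).mpr hp))
    calc E'.card ≤ (insert (∞ : OnePoint X) (E.image (OnePoint.some : X → OnePoint X))).card :=
          Finset.card_le_card hsub
      _ ≤ (E.image (OnePoint.some : X → OnePoint X)).card + 1 := Finset.card_insert_le _ _
      _ ≤ E.card + 1 := by rw [Finset.card_image_of_injective _ OnePoint.coe_injective]
  calc (E'.card : ℝ≥0∞) ≤ ((E.card + 1 : ℕ) : ℝ≥0∞) := by exact_mod_cast hcard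
    _ = (E.card : ℝ≥0∞) + 1 := by push_cast; ring
    _ ≤ sepCard d f n ε Set.univ + 1 := by
        have hle : (E.card : ℝ≥0∞) ≤ sepCard d f n ε Set.univ :=
          le_iSup₂_of_le E ⟨Set.subset_univ _, hsep⟩ le_rfl
        exact add_le_add_left hle 1

lemma aux_limsup_le_of_eventually {u : ℕ → ℝ≥0∞} {a : ℝ≥0∞}
    (h : ∀ᶠ n in Filter.atTop, u n ≤ a) : Filter.atTop.limsup u ≤ a := by
  rw [Filter.limsup_eq]; exact sInf_le h

lemma aux_ev_div_le {B : ℝ≥0∞} (hB : B ≠ ⊤) {γ : ℝ≥0∞} (hγ : γ ≠ 0) (hγt : γ ≠ ⊤) :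
    ∀ᶠ N : ℕ in Filter.atTop, B / N ≤ γ := by
  obtain ⟨n₀, hn₀⟩ := ENNReal.exists_nat_gt (ENNReal.div_lt_top hB hγ).ne
  filter_upwards [Filter.eventually_ge_atTop n₀] with N hN
  have h1 : B / γ ≤ (N : ℝ≥0∞) := le_trans hn₀.le (by exact_mod_cast hN)
  have h2 : B ≤ γ * N := by
    calc B = B / γ * γ := (ENNReal.div_mul_cancel hγ hγt).symm
      _ ≤ (N : ℝ≥0∞) * γ := mul_le_mul_left h1 _
      _ = γ * N := mul_comm _ _
  exact ENNReal.div_le_of_le_mul h2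

lemma aux_sepEntEps_eq (d' : OnePoint X → OnePoint X → ℝ) (d : X → X → ℝ)
    (hext : ∀ x y : X, d' ↑x ↑y = d x y) (f : X → X) (ε : ℝ) :
    sepEntEps d' (onePointExtend f) ε Set.univ = sepEntEps d f ε Set.univ := by
  apply le_antisymm
  · set L := sepEntEps d f ε Set.univ with hL
    rcases eq_or_ne L ⊤ with hLt | hLt
    · rw [hLt]; exact le_top
    apply ENNReal.le_of_forall_pos_le_add
    intro δ hδ _
    have hδ2 : ((δ : ℝ≥0∞))/2 ≠ 0 := by
      simp [ENNReal.div_eq_zero_iff, hδ.ne']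
    have hev1 : ∀ᶠ n in Filter.atTop,
        elog (sepCard d f n ε Set.univ) / n < L + (δ : ℝ≥0∞)/2 :=
      Filter.eventually_lt_of_limsup_lt (ENNReal.lt_add_right hLt hδ2)
    have hev2 : ∀ᶠ n : ℕ in Filter.atTop,
        ENNReal.ofReal (Real.log 2) / n ≤ (δ : ℝ≥0∞)/2 :=
      aux_ev_div_le ENNReal.ofReal_ne_top hδ2 (by
        exact (ENNReal.div_lt_top ENNReal.coe_ne_top (by norm_num)).ne)
    refine aux_limsup_le_of_eventually ?_
    filter_upwards [hev1, hev2] with n h1 h2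
    have hstep : elog (sepCard d' (onePointExtend f) n ε Set.univ)
        ≤ elog (sepCard d f n ε Set.univ) + ENNReal.ofReal (Real.log 2) :=
      le_trans (aux_elog_mono (aux_sepCard_ge d' d hext f n ε)) (aux_elog_add_one_le _)
    calc elog (sepCard d' (onePointExtend f) n ε Set.univ) / n
        ≤ (elog (sepCard d f n ε Set.univ) + ENNReal.ofReal (Real.log 2)) / n :=
          ENNReal.div_le_div_right hstep _
      _ = elog (sepCard d f n ε Set.univ)/n + ENNReal.ofReal (Real.log 2)/n := ENNReal.add_div
      _ ≤ (L + (δ : ℝ≥0∞)/2) + (δ : ℝ≥0∞)/2 := add_le_add h1.le h2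
      _ = L + (δ : ℝ≥0∞) := by rw [add_assoc, ENNReal.add_halves]
  · refine Filter.limsup_le_limsup (Filter.Eventually.of_forall fun n => ?_)
    exact ENNReal.div_le_div_right (aux_elog_mono (aux_sepCard_le d' d hext f n ε)) _

lemma aux_dEnt_eq (d' : OnePoint X → OnePoint X → ℝ) (d : X → X → ℝ)
    (hext : ∀ x y : X, d' ↑x ↑y = d x y) (f : X → X) :
    dEnt d f = dEnt d' (onePointExtend f) := by
  unfold dEnt sepEnt
  exact iSup_congr fun ε => iSup_congr fun hε => (aux_sepEntEps_eq d' d hext f ε).symm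

end AuxPart1
section AuxCover

open OnePoint

variable {X : Type*}

def auxHasFin (𝒰 : Set (Set X)) : Prop :=
  ∃ V : Finset (Set X), ↑V ⊆ 𝒰 ∧ ⋃₀ (V : Set (Set X)) = Set.univ

lemma aux_coverN_le_card {𝒰 : Set (Set X)} {V : Finset (Set X)}
    (h1 : ↑V ⊆ 𝒰) (h2 : ⋃₀ (V : Set (Set X)) = Set.univ) : coverN 𝒰 ≤ V.card :=
  Nat.sInf_le ⟨V, h1, h2, rfl⟩

lemma aux_exists_min_subcover {𝒰 : Set (Set X)} (h : auxHasFin 𝒰) :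
    ∃ V : Finset (Set X), ↑V ⊆ 𝒰 ∧ ⋃₀ (V : Set (Set X)) = Set.univ ∧ V.card = coverN 𝒰 := by
  obtain ⟨V, h1, h2⟩ := h
  have hne : {n | ∃ 𝒱 : Finset (Set X), ↑𝒱 ⊆ 𝒰 ∧ ⋃₀ (𝒱 : Set (Set X)) = Set.univ ∧
      𝒱.card = n}.Nonempty := ⟨V.card, V, h1, h2, rfl⟩
  exact Nat.sInf_mem hne

lemma aux_coverN_le_of_refines {𝒜 ℬ : Set (Set X)}
    (href : ∀ B ∈ ℬ, ∃ A ∈ 𝒜, B ⊆ A) (hfin : auxHasFin ℬ) : coverN 𝒜 ≤ coverN ℬ := by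
  classical
  obtain ⟨V, hV1, hV2, hV3⟩ := aux_exists_min_subcover hfin
  set φ : Set X → Set X := fun B => if h : ∃ A ∈ 𝒜, B ⊆ A then h.choose else ∅ with hφ
  have hφspec : ∀ B ∈ ℬ, φ B ∈ 𝒜 ∧ B ⊆ φ B := by
    intro B hB
    have h := href B hB
    rw [hφ]
    simp only [dif_pos h]
    exact ⟨h.choose_spec.1, h.choose_spec.2⟩
  refine le_trans (aux_coverN_le_card (V := V.image φ) ?_ ?_) ?_
  · intro A hA
    simp only [Finset.coe_image, Set.mem_image, Finset.mem_coe] at hA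
    obtain ⟨B, hB, rfl⟩ := hA
    exact (hφspec B (hV1 (Finset.mem_coe.mpr hB))).1
  · rw [Set.eq_univ_iff_forall]
    intro x
    have hx : x ∈ ⋃₀ (V : Set (Set X)) := by rw [hV2]; trivial
    obtain ⟨B, hB, hxB⟩ := hx
    refine ⟨φ B, ?_, (hφspec B (hV1 hB)).2 hxB⟩
    simp only [Finset.coe_image, Set.mem_image, Finset.mem_coe]
    exact ⟨B, Finset.mem_coe.mp hB, rfl⟩
  · rw [← hV3]
    exact Finset.card_image_le

lemma aux_coverN_onePoint_le [Nonempty X] {𝒜 : Set (Set (OnePoint X))} {ℬ : Set (Set X)} {K : ℕ}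
    (hfin : auxHasFin ℬ)
    (H : ∀ B ∈ ℬ, ∃ F : Finset (Set (OnePoint X)), ↑F ⊆ 𝒜 ∧ F.card ≤ K ∧
      insert (∞ : OnePoint X) (OnePoint.some '' B) ⊆ ⋃₀ (F : Set (Set (OnePoint X)))) :
    coverN 𝒜 ≤ K * coverN ℬ := by
  classical
  obtain ⟨V, hV1, hV2, hV3⟩ := aux_exists_min_subcover hfin
  have hVne : V.Nonempty := by
    obtain ⟨x⟩ := ‹Nonempty X›
    have hx : (x : X) ∈ ⋃₀ (V : Set (Set X)) := by rw [hV2]; trivial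
    obtain ⟨B, hB, _⟩ := hx
    exact ⟨B, Finset.mem_coe.mp hB⟩
  set Φ : Set X → Finset (Set (OnePoint X)) :=
    fun B => if h : B ∈ ℬ then (H B h).choose else ∅ with hΦ
  have hΦspec : ∀ B ∈ ℬ, ↑(Φ B) ⊆ 𝒜 ∧ (Φ B).card ≤ K ∧
      insert (∞ : OnePoint X) (OnePoint.some '' B) ⊆ ⋃₀ ((Φ B : Set (Set (OnePoint X)))) := by
    intro B hB
    rw [hΦ]
    simp only [dif_pos hB]
    exact (H B hB).choose_spec
  refine le_trans (aux_coverN_le_card (V := V.biUnion Φ) ?_ ?_) ?_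
  · intro A hA
    simp only [Finset.coe_biUnion, Set.mem_iUnion, Finset.mem_coe] at hA
    obtain ⟨B, hB, hA⟩ := hA
    exact (hΦspec B (hV1 (Finset.mem_coe.mpr hB))).1 (Finset.mem_coe.mpr hA)
  · rw [Set.eq_univ_iff_forall]
    intro p
    induction p using OnePoint.rec with
    | infty =>
        obtain ⟨B, hB⟩ := hVne
        obtain ⟨A, hA1, hA2⟩ :=
          (hΦspec B (hV1 (Finset.mem_coe.mpr hB))).2.2 (Set.mem_insert _ _)
        refine ⟨A, ?_, hA2⟩
        exact Finset.mem_coe.mpr (Finset.mem_biUnion.mpr ⟨B, hB, Finset.mem_coe.mp hA1⟩)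
    | coe x =>
        have hx : x ∈ ⋃₀ (V : Set (Set X)) := by rw [hV2]; trivial
        obtain ⟨B, hB, hxB⟩ := hx
        obtain ⟨A, hA1, hA2⟩ := (hΦspec B (hV1 hB)).2.2
          (Set.mem_insert_of_mem _ ⟨x, hxB, rfl⟩)
        refine ⟨A, ?_, hA2⟩
        exact Finset.mem_coe.mpr
          (Finset.mem_biUnion.mpr ⟨B, Finset.mem_coe.mp hB, Finset.mem_coe.mp hA1⟩)
  · calc (V.biUnion Φ).card ≤ ∑ B ∈ V, (Φ B).card := Finset.card_biUnion_le
      _ ≤ ∑ _B ∈ V, K := Finset.sum_le_sum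
          (fun B hB => (hΦspec B (hV1 (Finset.mem_coe.mpr hB))).2.1)
      _ = V.card * K := by rw [Finset.sum_const, smul_eq_mul]
      _ = K * coverN ℬ := by rw [hV3, Nat.mul_comm]

lemma aux_iterate_preimage_compact [TopologicalSpace X] {f : X → X}
    (hp : ∀ K : Set X, IsCompact K → IsCompact (f ⁻¹' K)) (i : ℕ) :
    ∀ K : Set X, IsCompact K → IsCompact (f^[i] ⁻¹' K) := by
  induction i with
  | zero => intro K hK; simpa using hK
  | succ n ih =>
      intro K hK
      rw [Function.iterate_succ, Set.preimage_comp]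
      exact hp _ (ih K hK)

lemma aux_isCoCompactCover_iterJoin [TopologicalSpace X] {f : X → X} {𝒰 : Set (Set X)}
    (hf : Continuous f) (hp : ∀ K : Set X, IsCompact K → IsCompact (f ⁻¹' K))
    (h : IsCoCompactCover 𝒰) (n : ℕ) : IsCoCompactCover (iterJoin f 𝒰 n) := by
  constructor
  · rintro W ⟨u, hu, rfl⟩
    constructor
    · exact isOpen_iInter_of_finite fun i => ((h.1 _ (hu i)).1).preimage (hf.iterate _)
    · rw [Set.compl_iInter]
      exact isCompact_iUnion fun i => by
        rw [← Set.preimage_compl]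
        exact aux_iterate_preimage_compact hp _ _ (h.1 _ (hu i)).2
  · rw [Set.eq_univ_iff_forall]
    intro x
    have hch : ∀ i : Fin n, ∃ U ∈ 𝒰, f^[(i:ℕ)] x ∈ U := fun i => by
      have hx : f^[(i:ℕ)] x ∈ ⋃₀ 𝒰 := by rw [h.2]; trivial
      obtain ⟨U, hU, hxU⟩ := hx
      exact ⟨U, hU, hxU⟩
    choose u hu hxu using hch
    exact ⟨⋂ i : Fin n, f^[(i:ℕ)]⁻¹' u i, ⟨u, hu, rfl⟩, Set.mem_iInter.mpr fun i => hxu i⟩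

lemma aux_hasFin_of_coCompact [TopologicalSpace X] {𝒰 : Set (Set X)}
    (h : IsCoCompactCover 𝒰) : auxHasFin 𝒰 := by
  classical
  rcases isEmpty_or_nonempty X with hE | hNE
  · refine ⟨∅, by simp, ?_⟩
    simp only [Finset.coe_empty, Set.sUnion_empty]
    exact (Set.univ_eq_empty_iff.mpr hE).symm
  · obtain ⟨x⟩ := hNE
    have hx : x ∈ ⋃₀ 𝒰 := by rw [h.2]; trivial
    obtain ⟨U₀, hU₀, _⟩ := hx
    have hK : IsCompact U₀ᶜ := (h.1 U₀ hU₀).2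
    have hcov : U₀ᶜ ⊆ ⋃ U : ↥𝒰, (U : Set X) := by
      intro y _
      have hy : y ∈ ⋃₀ 𝒰 := by rw [h.2]; trivial
      obtain ⟨U, hU, hyU⟩ := hy
      exact Set.mem_iUnion.mpr ⟨⟨U, hU⟩, hyU⟩
    obtain ⟨t, ht⟩ := hK.elim_finite_subcover (fun U : ↥𝒰 => (U : Set X))
      (fun U => (h.1 _ U.2).1) hcov
    refine ⟨insert U₀ (t.image Subtype.val), ?_, ?_⟩
    · intro A hA
      rw [Finset.mem_coe, Finset.mem_insert] at hA
      rcases hA with rfl | hA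
      · exact hU₀
      · obtain ⟨U, _, rfl⟩ := Finset.mem_image.mp hA
        exact U.2
    · rw [Set.eq_univ_iff_forall]
      intro y
      by_cases hy : y ∈ U₀
      · exact ⟨U₀, by simp, hy⟩
      · have hyn := ht hy
        simp only [Set.mem_iUnion] at hyn
        obtain ⟨U, hUt, hyU⟩ := hyn
        refine ⟨U, ?_, hyU⟩
        exact Finset.mem_coe.mpr
          (Finset.mem_insert.mpr (Or.inr (Finset.mem_image_of_mem Subtype.val hUt)))

end AuxCover
section AuxTset

open OnePoint

variable {X : Type*}

def auxTset (U : Set X) : Set (OnePoint X) := insert (∞ : OnePoint X) (OnePoint.some '' U)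

lemma aux_infty_mem_tset (U : Set X) : (∞ : OnePoint X) ∈ auxTset U := Set.mem_insert _ _

lemma aux_mem_tset_coe {U : Set X} {x : X} : (OnePoint.some x) ∈ auxTset U ↔ x ∈ U := by
  simp only [auxTset, Set.mem_insert_iff, Set.mem_image]
  constructor
  · rintro (h | ⟨y, hy, hyx⟩)
    · exact absurd h (OnePoint.coe_ne_infty x)
    · rwa [← OnePoint.coe_injective hyx]
  · intro h
    exact Or.inr ⟨x, h, rfl⟩

lemma aux_coe_preimage_tset (U : Set X) : (OnePoint.some) ⁻¹' (auxTset U) = U := by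
  ext x
  exact aux_mem_tset_coe

lemma aux_preimage_tset (f : X → X) (j : ℕ) (U : Set X) :
    (onePointExtend f)^[j] ⁻¹' (auxTset U) = auxTset (f^[j] ⁻¹' U) := by
  ext p
  induction p using OnePoint.rec with
  | infty =>
      simp only [Set.mem_preimage, auxOPE_iter_infty]
      simp [aux_infty_mem_tset]
  | coe x =>
      simp only [Set.mem_preimage, auxOPE_iter_coe]
      rw [show ((↑(f^[j] x) : OnePoint X)) = OnePoint.some (f^[j] x) from rfl,
        aux_mem_tset_coe, aux_mem_tset_coe]
      exact Iff.rfl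

lemma aux_iInter_tset {n : ℕ} (A : Fin n → Set X) :
    (⋂ i : Fin n, auxTset (A i)) = auxTset (⋂ i : Fin n, A i) := by
  ext p
  induction p using OnePoint.rec with
  | infty => simp [aux_infty_mem_tset]
  | coe x => simp [aux_mem_tset_coe]

lemma aux_tset_cell (f : X → X) {n : ℕ} (v : Fin n → Set X) :
    (⋂ i : Fin n, (onePointExtend f)^[(i:ℕ)] ⁻¹' (auxTset (v i)))
      = auxTset (⋂ i : Fin n, f^[(i:ℕ)] ⁻¹' (v i)) := by
  rw [Set.iInter_congr (fun i : Fin n => aux_preimage_tset f (i:ℕ) (v i))]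
  exact aux_iInter_tset _

lemma aux_iterJoin_tset (f : X → X) (𝒰 : Set (Set X)) (n : ℕ) :
    iterJoin (onePointExtend f) (auxTset '' 𝒰) n = auxTset '' iterJoin f 𝒰 n := by
  ext W
  constructor
  · rintro ⟨u, hu, rfl⟩
    choose v hv hveq using hu
    refine ⟨⋂ i : Fin n, f^[(i:ℕ)]⁻¹' v i, ⟨v, hv, rfl⟩, ?_⟩
    rw [← aux_tset_cell]
    exact Set.iInter_congr fun i : Fin n => by rw [hveq i]
  · rintro ⟨B, ⟨v, hv, rfl⟩, rfl⟩
    exact ⟨fun i => auxTset (v i), fun i => ⟨v i, hv i, rfl⟩, (aux_tset_cell f v).symm⟩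

lemma aux_coverN_tset [Nonempty X] (𝒜 : Set (Set X)) :
    coverN (auxTset '' 𝒜) = coverN 𝒜 := by
  classical
  have hb : ∀ V : Finset (Set X), ↑V ⊆ 𝒜 → ⋃₀ (V : Set (Set X)) = Set.univ →
      (↑(V.image auxTset) ⊆ auxTset '' 𝒜 ∧
        ⋃₀ ((V.image auxTset : Finset (Set (OnePoint X))) : Set (Set (OnePoint X))) = Set.univ ∧
        (V.image auxTset).card ≤ V.card) := by
    intro V h1 h2
    refine ⟨?_, ?_, Finset.card_image_le⟩
    · intro W hW
      obtain ⟨U, hU, rfl⟩ := Finset.mem_image.mp (Finset.mem_coe.mp hW)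
      exact ⟨U, h1 (Finset.mem_coe.mpr hU), rfl⟩
    · rw [Set.eq_univ_iff_forall]
      intro p
      induction p using OnePoint.rec with
      | infty =>
          have hVne : V.Nonempty := by
            obtain ⟨x⟩ := ‹Nonempty X›
            have hx : x ∈ ⋃₀ (V : Set (Set X)) := by rw [h2]; trivial
            obtain ⟨B, hB, _⟩ := hx
            exact ⟨B, Finset.mem_coe.mp hB⟩
          obtain ⟨B, hB⟩ := hVne
          exact ⟨auxTset B, Finset.mem_coe.mpr (Finset.mem_image_of_mem _ hB),
            aux_infty_mem_tset B⟩
      | coe x =>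
          have hx : x ∈ ⋃₀ (V : Set (Set X)) := by rw [h2]; trivial
          obtain ⟨B, hB, hxB⟩ := hx
          exact ⟨auxTset B, Finset.mem_coe.mpr (Finset.mem_image_of_mem _ (Finset.mem_coe.mp hB)),
            aux_mem_tset_coe.mpr hxB⟩
  have ha : ∀ V' : Finset (Set (OnePoint X)), ↑V' ⊆ auxTset '' 𝒜 →
      ⋃₀ (V' : Set (Set (OnePoint X))) = Set.univ →
      (↑(V'.image (fun S => OnePoint.some ⁻¹' S)) ⊆ 𝒜 ∧
        ⋃₀ ((V'.image (fun S => OnePoint.some ⁻¹' S)) : Set (Set X)) = Set.univ ∧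
        (V'.image (fun S => OnePoint.some ⁻¹' S)).card ≤ V'.card) := by
    intro V' h1 h2
    refine ⟨?_, ?_, Finset.card_image_le⟩
    · intro A hA
      obtain ⟨S, hS, rfl⟩ := Finset.mem_image.mp (Finset.mem_coe.mp hA)
      obtain ⟨U, hU, rfl⟩ := h1 (Finset.mem_coe.mpr hS)
      rwa [aux_coe_preimage_tset]
    · rw [Set.eq_univ_iff_forall]
      intro x
      have hx : (OnePoint.some x) ∈ ⋃₀ (V' : Set (Set (OnePoint X))) := by rw [h2]; trivial
      obtain ⟨S, hS, hxS⟩ := hx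
      exact ⟨OnePoint.some ⁻¹' S,
        Finset.mem_coe.mpr (Finset.mem_image_of_mem _ (Finset.mem_coe.mp hS)), hxS⟩
  apply le_antisymm
  · by_cases h1 : auxHasFin 𝒜
    · obtain ⟨V, hV1, hV2, hV3⟩ := aux_exists_min_subcover h1
      obtain ⟨g1, g2, g3⟩ := hb V hV1 hV2
      exact le_trans (aux_coverN_le_card g1 g2) (le_trans g3 (le_of_eq hV3))
    · have hempty : {n | ∃ 𝒱 : Finset (Set (OnePoint X)), ↑𝒱 ⊆ auxTset '' 𝒜 ∧
          ⋃₀ (𝒱 : Set (Set (OnePoint X))) = Set.univ ∧ 𝒱.card = n} = ∅ := by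
        rw [Set.eq_empty_iff_forall_notMem]
        rintro n ⟨V, hV1, hV2, _⟩
        exact h1 ⟨_, (ha V hV1 hV2).1, (ha V hV1 hV2).2.1⟩
      have hz : coverN (auxTset '' 𝒜) = 0 := by
        unfold coverN
        rw [hempty, Nat.sInf_empty]
      rw [hz]
      exact Nat.zero_le _
  · by_cases h1 : auxHasFin (auxTset '' 𝒜)
    · obtain ⟨V', hV1, hV2, hV3⟩ := aux_exists_min_subcover h1
      obtain ⟨g1, g2, g3⟩ := ha V' hV1 hV2
      exact le_trans (aux_coverN_le_card g1 g2) (le_trans g3 (le_of_eq hV3))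
    · have hempty : {n | ∃ 𝒱 : Finset (Set X), ↑𝒱 ⊆ 𝒜 ∧
          ⋃₀ (𝒱 : Set (Set X)) = Set.univ ∧ 𝒱.card = n} = ∅ := by
        rw [Set.eq_empty_iff_forall_notMem]
        rintro n ⟨V, hV1, hV2, _⟩
        exact h1 ⟨_, (hb V hV1 hV2).1, (hb V hV1 hV2).2.1⟩
      have hz : coverN 𝒜 = 0 := by
        unfold coverN
        rw [hempty, Nat.sInf_empty]
      rw [hz]
      exact Nat.zero_le _

lemma aux_isCoCompactCover_tset [TopologicalSpace X] [Nonempty X] {𝒰 : Set (Set X)}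
    (h : IsCoCompactCover 𝒰) : IsCoCompactCover (auxTset '' 𝒰) := by
  constructor
  · rintro W ⟨U, hU, rfl⟩
    have h1 : IsOpen (auxTset U) := by
      rw [OnePoint.isOpen_iff_of_mem (aux_infty_mem_tset U)]
      rw [show ((↑) : X → OnePoint X) ⁻¹' (auxTset U) = U from aux_coe_preimage_tset U]
      exact ⟨(h.1 U hU).1.isClosed_compl, (h.1 U hU).2⟩
    refine ⟨h1, ?_⟩
    have h2 : (auxTset U)ᶜ = OnePoint.some '' Uᶜ := by
      ext p
      induction p using OnePoint.rec with
      | infty =>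
          simp only [Set.mem_compl_iff, aux_infty_mem_tset, not_true_eq_false, false_iff]
          rintro ⟨y, _, hy⟩
          exact OnePoint.coe_ne_infty y hy
      | coe x =>
          simp only [Set.mem_compl_iff, aux_mem_tset_coe, Set.mem_image]
          constructor
          · intro hx
            exact ⟨x, hx, rfl⟩
          · rintro ⟨y, hy, hyx⟩
            rwa [← OnePoint.coe_injective hyx]
    rw [h2]
    exact ((h.1 U hU).2).image OnePoint.continuous_coe
  · rw [Set.eq_univ_iff_forall]
    intro p
    induction p using OnePoint.rec with
    | infty =>
        obtain ⟨U, hU⟩ : ∃ U, U ∈ 𝒰 := by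
          obtain ⟨x⟩ := ‹Nonempty X›
          have hx : x ∈ ⋃₀ 𝒰 := by rw [h.2]; trivial
          obtain ⟨U, hU, _⟩ := hx
          exact ⟨U, hU⟩
        exact ⟨auxTset U, ⟨U, hU, rfl⟩, aux_infty_mem_tset U⟩
    | coe x =>
        have hx : x ∈ ⋃₀ 𝒰 := by rw [h.2]; trivial
        obtain ⟨U, hU, hxU⟩ := hx
        exact ⟨auxTset U, ⟨U, hU, rfl⟩, aux_mem_tset_coe.mpr hxU⟩

lemma aux_cEntCover_tset [Nonempty X] (f : X → X) (𝒰 : Set (Set X)) :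
    cEntCover (onePointExtend f) (auxTset '' 𝒰) = cEntCover f 𝒰 := by
  unfold cEntCover
  congr 1
  funext n
  rw [covH, covH, aux_iterJoin_tset, aux_coverN_tset]

end AuxTset
section AuxLimsup

variable {X : Type*}

lemma aux_limsup_subseq_le (u : ℕ → ℝ≥0∞) (φ : ℕ → ℕ)
    (hφ : Filter.Tendsto φ Filter.atTop Filter.atTop) :
    Filter.atTop.limsup (fun q => u (φ q)) ≤ Filter.atTop.limsup u := by
  rw [Filter.limsup_eq, Filter.limsup_eq]
  apply sInf_le_sInf
  intro a ha
  exact hφ.eventually ha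

lemma aux_limsup_const_mul_le (c : ℝ≥0∞) (hc : c ≠ ⊤) (u : ℕ → ℝ≥0∞) :
    Filter.atTop.limsup (fun n => c * u n) ≤ c * Filter.atTop.limsup u := by
  rcases eq_or_ne c 0 with rfl | hc0
  · simp
  rcases eq_or_ne (Filter.atTop.limsup u) ⊤ with htop | htop
  · rw [htop, ENNReal.mul_top hc0]
    exact le_top
  apply ENNReal.le_of_forall_pos_le_add
  intro ε hε _
  have hεc : ((ε : ℝ≥0∞) / c) ≠ 0 := by
    simp [ENNReal.div_eq_zero_iff, hε.ne', hc]
  have hev : ∀ᶠ n in Filter.atTop, u n < Filter.atTop.limsup u + (ε : ℝ≥0∞)/c :=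
    Filter.eventually_lt_of_limsup_lt (ENNReal.lt_add_right htop hεc)
  refine aux_limsup_le_of_eventually ?_
  filter_upwards [hev] with n hn
  calc c * u n ≤ c * (Filter.atTop.limsup u + (ε : ℝ≥0∞)/c) := mul_le_mul_right hn.le c
    _ = c * Filter.atTop.limsup u + c * ((ε : ℝ≥0∞)/c) := mul_add _ _ _
    _ = c * Filter.atTop.limsup u + ε := by rw [ENNReal.mul_div_cancel hc0 hc]

lemma aux_ell_mono {a b : ℕ} (hab : a ≤ b) :
    ENNReal.ofReal (Real.log a) ≤ ENNReal.ofReal (Real.log b) := by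
  rcases Nat.eq_zero_or_pos a with rfl | ha
  · simp
  exact ENNReal.ofReal_le_ofReal (Real.log_le_log (by exact_mod_cast ha) (by exact_mod_cast hab))

lemma aux_covH_mono {𝒜 ℬ : Set (Set X)} (h : coverN 𝒜 ≤ coverN ℬ) : covH 𝒜 ≤ covH ℬ :=
  aux_ell_mono h

lemma aux_ell_pow_mul (q k : ℕ) :
    ENNReal.ofReal (Real.log ((2^q * k : ℕ) : ℝ)) ≤
      (q : ℝ≥0∞) * ENNReal.ofReal (Real.log 2) + ENNReal.ofReal (Real.log k) := by
  rcases Nat.eq_zero_or_pos k with rfl | hk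
  · simp
  have hk0 : (k : ℝ) ≠ 0 := by exact_mod_cast hk.ne'
  have hcast : ((2^q * k : ℕ) : ℝ) = (2:ℝ)^q * (k:ℝ) := by push_cast; ring
  rw [hcast, Real.log_mul (pow_ne_zero _ (by norm_num)) hk0, Real.log_pow]
  calc ENNReal.ofReal ((q : ℝ) * Real.log 2 + Real.log k)
      ≤ ENNReal.ofReal ((q : ℝ) * Real.log 2) + ENNReal.ofReal (Real.log k) :=
        ENNReal.ofReal_add_le
    _ = (q : ℝ≥0∞) * ENNReal.ofReal (Real.log 2) + ENNReal.ofReal (Real.log k) := by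
        rw [ENNReal.ofReal_mul (by positivity), ENNReal.ofReal_natCast]

lemma aux_div_mul_nat (x : ℝ≥0∞) {m q : ℕ} (hm : m ≠ 0) (hq : q ≠ 0) :
    x / (q : ℝ≥0∞) = (m : ℝ≥0∞) * (x / ((m*q : ℕ) : ℝ≥0∞)) := by
  have h1 : (m:ℝ≥0∞) ≠ 0 := Nat.cast_ne_zero.mpr hm
  have h2 : (m:ℝ≥0∞) ≠ ⊤ := ENNReal.natCast_ne_top m
  symm
  calc (m:ℝ≥0∞) * (x / ((m*q : ℕ) : ℝ≥0∞))
      = (m:ℝ≥0∞) * (x * ((m:ℝ≥0∞)⁻¹ * (q:ℝ≥0∞)⁻¹)) := by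
        rw [Nat.cast_mul, div_eq_mul_inv, ENNReal.mul_inv (Or.inl h1) (Or.inl h2)]
    _ = ((m:ℝ≥0∞) * (m:ℝ≥0∞)⁻¹) * (x * (q:ℝ≥0∞)⁻¹) := by ring
    _ = x / (q : ℝ≥0∞) := by rw [ENNReal.mul_inv_cancel h1 h2, one_mul, div_eq_mul_inv]

lemma aux_cEntCover_pow_le [TopologicalSpace X] {f : X → X} {𝒰 : Set (Set X)}
    (hf : Continuous f) (hp : ∀ K : Set X, IsCompact K → IsCompact (f ⁻¹' K))
    (h𝒰 : IsCoCompactCover 𝒰) {m : ℕ} (hm : 0 < m) :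
    cEntCover (f^[m]) 𝒰 ≤ (m : ℝ≥0∞) * cEntCover f 𝒰 := by
  have hkey : ∀ q : ℕ, coverN (iterJoin (f^[m]) 𝒰 q) ≤ coverN (iterJoin f 𝒰 (m*q)) := by
    intro q
    apply aux_coverN_le_of_refines
    · rintro B ⟨w, hw, rfl⟩
      refine ⟨⋂ i : Fin q, (f^[m])^[(i:ℕ)]⁻¹' (w ⟨m*(i:ℕ), (Nat.mul_lt_mul_left hm).mpr i.2⟩),
        ⟨fun i => w ⟨m*(i:ℕ), (Nat.mul_lt_mul_left hm).mpr i.2⟩,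
          fun i => hw _, rfl⟩, ?_⟩
      intro x hx
      rw [Set.mem_iInter] at hx ⊢
      intro i
      rw [Set.mem_preimage, ← Function.iterate_mul]
      exact hx ⟨m*(i:ℕ), (Nat.mul_lt_mul_left hm).mpr i.2⟩
    · exact aux_hasFin_of_coCompact (aux_isCoCompactCover_iterJoin hf hp h𝒰 _)
  have hev : ∀ᶠ q : ℕ in Filter.atTop, covH (iterJoin (f^[m]) 𝒰 q) / (q : ℝ≥0∞)
      ≤ (m : ℝ≥0∞) * (covH (iterJoin f 𝒰 (m*q)) / ((m*q : ℕ) : ℝ≥0∞)) := by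
    filter_upwards [Filter.eventually_ge_atTop 1] with q _hq
    calc covH (iterJoin (f^[m]) 𝒰 q) / (q : ℝ≥0∞)
        ≤ covH (iterJoin f 𝒰 (m*q)) / (q : ℝ≥0∞) :=
          ENNReal.div_le_div_right (aux_covH_mono (hkey q)) _
      _ = (m : ℝ≥0∞) * (covH (iterJoin f 𝒰 (m*q)) / ((m*q : ℕ) : ℝ≥0∞)) :=
          aux_div_mul_nat _ hm.ne' (by omega)
  refine le_trans (Filter.limsup_le_limsup hev) ?_
  refine le_trans (aux_limsup_const_mul_le _ (ENNReal.natCast_ne_top m) _) ?_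
  refine mul_le_mul_right ?_ _
  exact aux_limsup_subseq_le _ (fun q => m*q)
    (Filter.tendsto_atTop_mono (fun q => Nat.le_mul_of_pos_left q hm) Filter.tendsto_id)

end AuxLimsup
section AuxMain

open OnePoint

variable {X : Type*}

lemma aux_split_div (B : ℝ≥0∞) {m N : ℕ} (hm : m ≠ 0) (hN : N ≠ 0) :
    (((N:ℝ≥0∞) + m)/m * B)/N = B/m + B/N := by
  have hm0 : (m:ℝ≥0∞) ≠ 0 := Nat.cast_ne_zero.mpr hm
  have hmt : (m:ℝ≥0∞) ≠ ⊤ := ENNReal.natCast_ne_top m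
  have hN0 : (N:ℝ≥0∞) ≠ 0 := Nat.cast_ne_zero.mpr hN
  have hNt : (N:ℝ≥0∞) ≠ ⊤ := ENNReal.natCast_ne_top N
  calc (((N:ℝ≥0∞) + m)/m * B)/N
      = ((N:ℝ≥0∞) + m) * B * ((m:ℝ≥0∞)⁻¹ * (N:ℝ≥0∞)⁻¹) := by
        rw [div_eq_mul_inv, div_eq_mul_inv]; ring
    _ = ((N:ℝ≥0∞)*(N:ℝ≥0∞)⁻¹) * (B * (m:ℝ≥0∞)⁻¹)
          + ((m:ℝ≥0∞)*(m:ℝ≥0∞)⁻¹) * (B * (N:ℝ≥0∞)⁻¹) := by ring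
    _ = B/m + B/N := by
        rw [ENNReal.mul_inv_cancel hN0 hNt, ENNReal.mul_inv_cancel hm0 hmt, one_mul, one_mul,
          div_eq_mul_inv, div_eq_mul_inv]

lemma aux_assembly {m : ℕ} (hm : 0 < m) (a c : ℕ → ℕ)
    (key : ∀ N q : ℕ, N ≤ m*q → a N ≤ 2^q * c q)
    {D : ℝ≥0∞} (hD : Filter.atTop.limsup
      (fun q : ℕ => ENNReal.ofReal (Real.log (c q)) / q) ≤ D) (hDt : D ≠ ⊤) :
    Filter.atTop.limsup (fun N : ℕ => ENNReal.ofReal (Real.log (a N)) / N)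
      ≤ (ENNReal.ofReal (Real.log 2) + D) / m := by
  set ell2 := ENNReal.ofReal (Real.log 2) with hell2
  apply ENNReal.le_of_forall_pos_le_add
  intro ε hε _
  set δ : ℝ≥0∞ := (ε : ℝ≥0∞)/2 with hδdef
  have hδ0 : δ ≠ 0 := by
    simp [hδdef, ENNReal.div_eq_zero_iff, hε.ne']
  have hδt : δ ≠ ⊤ := by
    simp [hδdef]
    exact (ENNReal.div_lt_top ENNReal.coe_ne_top (by norm_num)).ne
  set B := ell2 + D + δ with hB
  have hBt : B ≠ ⊤ := by
    rw [hB]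
    exact ENNReal.add_ne_top.mpr ⟨ENNReal.add_ne_top.mpr ⟨ENNReal.ofReal_ne_top, hDt⟩, hδt⟩
  have hev1 : ∀ᶠ q : ℕ in Filter.atTop, ENNReal.ofReal (Real.log (c q)) / q < D + δ :=
    Filter.eventually_lt_of_limsup_lt (lt_of_le_of_lt hD (ENNReal.lt_add_right hDt hδ0))
  obtain ⟨Q₀, hQ₀⟩ := Filter.eventually_atTop.mp hev1
  have hev2 : ∀ᶠ N : ℕ in Filter.atTop,
      ENNReal.ofReal (Real.log (a N)) / N ≤ B/m + B/N := by
    filter_upwards [Filter.eventually_ge_atTop (m*(Q₀+1)), Filter.eventually_ge_atTop 1]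
      with N hN1 hN2
    set q := N/m + 1 with hqdef
    have hdm := Nat.div_add_mod N m
    have hmod := Nat.mod_lt N hm
    have hqQ : Q₀ ≤ q := by
      have h1 : Q₀ + 1 ≤ N/m := by
        rw [Nat.le_div_iff_mul_le hm]
        calc (Q₀+1) * m = m * (Q₀+1) := Nat.mul_comm _ _
          _ ≤ N := hN1
      omega
    have hmq : m*q = m*(N/m) + m := by rw [hqdef, Nat.mul_add, Nat.mul_one]
    have hNq : N ≤ m*q := by omega
    have hq0 : q ≠ 0 := Nat.succ_ne_zero _
    have hqc0 : (q:ℝ≥0∞) ≠ 0 := Nat.cast_ne_zero.mpr hq0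
    have hqub : (q:ℝ≥0∞) ≤ ((N:ℝ≥0∞) + m)/m := by
      rw [ENNReal.le_div_iff_mul_le (Or.inl (Nat.cast_ne_zero.mpr hm.ne'))
        (Or.inl (ENNReal.natCast_ne_top m))]
      have h2 : q * m ≤ N + m := by rw [Nat.mul_comm]; omega
      calc (q:ℝ≥0∞) * m = ((q*m : ℕ) : ℝ≥0∞) := by push_cast; ring
        _ ≤ ((N + m : ℕ) : ℝ≥0∞) := by exact_mod_cast h2
        _ = (N:ℝ≥0∞) + m := by push_cast; ring
    have h2 : ENNReal.ofReal (Real.log (a N))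
        ≤ (q:ℝ≥0∞) * ell2 + ENNReal.ofReal (Real.log (c q)) :=
      le_trans (aux_ell_mono (key N q hNq)) (aux_ell_pow_mul q (c q))
    have h3 : ENNReal.ofReal (Real.log (c q)) ≤ (q:ℝ≥0∞) * (D + δ) := by
      have hlt := hQ₀ q hqQ
      calc ENNReal.ofReal (Real.log (c q))
          = ENNReal.ofReal (Real.log (c q)) / q * q :=
            (ENNReal.div_mul_cancel hqc0 (ENNReal.natCast_ne_top q)).symm
        _ ≤ (D + δ) * q := mul_le_mul_left hlt.le _
        _ = (q:ℝ≥0∞) * (D + δ) := mul_comm _ _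
    have h4 : ENNReal.ofReal (Real.log (a N)) ≤ (q:ℝ≥0∞) * B := by
      calc ENNReal.ofReal (Real.log (a N))
          ≤ (q:ℝ≥0∞) * ell2 + (q:ℝ≥0∞) * (D + δ) := le_trans h2 (add_le_add_right h3 _)
        _ = (q:ℝ≥0∞) * B := by rw [hB, ← mul_add, add_assoc]
    calc ENNReal.ofReal (Real.log (a N)) / N ≤ ((q:ℝ≥0∞) * B)/N :=
          ENNReal.div_le_div_right h4 _
      _ ≤ ((((N:ℝ≥0∞) + m)/m) * B)/N :=
          ENNReal.div_le_div_right (mul_le_mul_left hqub B) _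
      _ = B/m + B/N := aux_split_div B hm.ne' (by omega)
  have hev3 : ∀ᶠ N : ℕ in Filter.atTop, B/(N:ℝ≥0∞) ≤ δ := aux_ev_div_le hBt hδ0 hδt
  have hfinal : Filter.atTop.limsup (fun N : ℕ => ENNReal.ofReal (Real.log (a N)) / N)
      ≤ B/m + δ := by
    refine aux_limsup_le_of_eventually ?_
    filter_upwards [hev2, hev3] with N g1 g2
    exact g1.trans (add_le_add_right g2 _)
  refine hfinal.trans ?_
  have hsplit : B/(m:ℝ≥0∞) = (ell2 + D)/m + δ/m := by
    rw [hB, ENNReal.add_div]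
  rw [hsplit]
  have hδm : δ/(m:ℝ≥0∞) ≤ δ := by
    refine ENNReal.div_le_of_le_mul ?_
    exact le_mul_of_one_le_right' (by exact_mod_cast hm)
  calc (ell2 + D)/(m:ℝ≥0∞) + δ/m + δ ≤ (ell2 + D)/m + δ + δ :=
        add_le_add_left (add_le_add_right hδm _) δ
    _ = (ell2 + D)/m + (δ + δ) := by rw [add_assoc]
    _ = (ell2 + D)/m + ε := by rw [hδdef, ENNReal.add_halves]

lemma aux_coe_preimage_iter (f : X → X) (j : ℕ) (S : Set (OnePoint X)) :
    OnePoint.some ⁻¹' ((onePointExtend f)^[j] ⁻¹' S) = f^[j] ⁻¹' (OnePoint.some ⁻¹' S) := by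
  ext x
  simp [Set.mem_preimage, auxOPE_iter_coe]

lemma aux_coe_preimage_compact [TopologicalSpace X] {K : Set (OnePoint X)} (hK : IsCompact K)
    (hinf : (∞ : OnePoint X) ∉ K) : IsCompact (OnePoint.some ⁻¹' K) := by
  have hsub : K ⊆ Set.range (OnePoint.some : X → OnePoint X) := by
    intro p hp
    induction p using OnePoint.rec with
    | infty => exact absurd hp hinf
    | coe x => exact ⟨x, rfl⟩
  rw [OnePoint.isOpenEmbedding_coe.isEmbedding.isCompact_iff]
  rwa [Set.image_preimage_eq_of_subset hsub]

end AuxMain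
section AuxMain2

open OnePoint

variable {X : Type*}

lemma aux_main_estimate [TopologicalSpace X] [Nonempty X] {f : X → X}
    (hf : Continuous f) (hp : ∀ K : Set X, IsCompact K → IsCompact (f ⁻¹' K))
    {𝒲 : Set (Set (OnePoint X))} (h𝒲 : IsCoCompactCover 𝒲)
    {W₀ : Set (OnePoint X)} (hW₀m : W₀ ∈ 𝒲) (hW₀ : (∞ : OnePoint X) ∈ W₀)
    {m : ℕ} (hm : 0 < m) (hc : cEnt f ≠ ⊤) :
    cEntCover (onePointExtend f) 𝒲
      ≤ (ENNReal.ofReal (Real.log 2) + (m:ℝ≥0∞) * cEnt f) / m := by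
  classical
  set C₀ : Set (OnePoint X) := ⋂ j : Fin m, (onePointExtend f)^[(j:ℕ)] ⁻¹' W₀ with hC₀
  have hinftyC₀ : (∞ : OnePoint X) ∈ C₀ := Set.mem_iInter.mpr fun j => by
    rw [Set.mem_preimage, auxOPE_iter_infty]
    exact hW₀
  set 𝒰 : Set (Set X) :=
    (fun C => OnePoint.some ⁻¹' (C ∪ C₀)) '' (iterJoin (onePointExtend f) 𝒲 m) with h𝒰def
  have hWopen : ∀ W ∈ 𝒲, IsOpen (OnePoint.some ⁻¹' W) := fun W hW =>
    (h𝒲.1 W hW).1.preimage OnePoint.continuous_coe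
  have hcellopen : ∀ (n : ℕ) (w : Fin n → Set (OnePoint X)), (∀ j, w j ∈ 𝒲) →
      IsOpen (OnePoint.some ⁻¹' (⋂ j : Fin n, (onePointExtend f)^[(j:ℕ)] ⁻¹' w j)) := by
    intro n w hw
    rw [Set.preimage_iInter]
    refine isOpen_iInter_of_finite fun j => ?_
    rw [aux_coe_preimage_iter]
    exact (hWopen _ (hw j)).preimage (hf.iterate _)
  have h𝒰cc : IsCoCompactCover 𝒰 := by
    constructor
    · rintro u ⟨C, ⟨w, hw, rfl⟩, rfl⟩
      have hopen : IsOpen (OnePoint.some ⁻¹'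
          ((⋂ j : Fin m, (onePointExtend f)^[(j:ℕ)]⁻¹' w j) ∪ C₀)) := by
        rw [Set.preimage_union]
        exact (hcellopen m w hw).union (hcellopen m (fun _ => W₀) (fun _ => hW₀m))
      refine ⟨hopen, ?_⟩
      have hKcomp : IsCompact ((OnePoint.some ⁻¹' C₀)ᶜ) := by
        rw [hC₀, Set.preimage_iInter, Set.compl_iInter]
        refine isCompact_iUnion fun j => ?_
        rw [aux_coe_preimage_iter, ← Set.preimage_compl]
        refine aux_iterate_preimage_compact hp _ _ ?_
        refine aux_coe_preimage_compact (h𝒲.1 W₀ hW₀m).2 ?_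
        simp [hW₀]
      refine IsCompact.of_isClosed_subset hKcomp hopen.isClosed_compl ?_
      intro x hx
      rw [Set.mem_compl_iff] at hx ⊢
      exact fun hxc => hx (Set.mem_preimage.mpr (Set.mem_union_right _ hxc))
    · rw [Set.eq_univ_iff_forall]
      intro x
      have hch : ∀ j : Fin m, ∃ W ∈ 𝒲, (onePointExtend f)^[(j:ℕ)] (OnePoint.some x) ∈ W :=
        fun j => by
          have hx : (onePointExtend f)^[(j:ℕ)] (OnePoint.some x) ∈ ⋃₀ 𝒲 := by
            rw [h𝒲.2]; trivial
          obtain ⟨W, hW, hxW⟩ := hx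
          exact ⟨W, hW, hxW⟩
      choose w hw hxw using hch
      refine ⟨OnePoint.some ⁻¹' ((⋂ j : Fin m, (onePointExtend f)^[(j:ℕ)]⁻¹' w j) ∪ C₀),
        ⟨_, ⟨w, hw, rfl⟩, rfl⟩, ?_⟩
      rw [Set.mem_preimage]
      exact Set.mem_union_left _ (Set.mem_iInter.mpr fun j => Set.mem_preimage.mpr (hxw j))
  have hkey : ∀ N q : ℕ, N ≤ m*q →
      coverN (iterJoin (onePointExtend f) 𝒲 N) ≤ 2^q * coverN (iterJoin (f^[m]) 𝒰 q) := by
    intro N q hNq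
    refine aux_coverN_onePoint_le
      (aux_hasFin_of_coCompact (aux_isCoCompactCover_iterJoin (hf.iterate m)
        (aux_iterate_preimage_compact hp m) h𝒰cc q)) ?_
    rintro B ⟨u, hu, rfl⟩
    choose C hC hCeq using fun i => hu i
    choose w hw hweq using fun i => hC i
    have hdiv : ∀ l : Fin N, (l:ℕ)/m < q := fun l => by
      rw [Nat.div_lt_iff_lt_mul hm]
      calc (l:ℕ) < N := l.2
        _ ≤ m*q := hNq
        _ = q*m := Nat.mul_comm _ _
    have hmod : ∀ l : Fin N, (l:ℕ)%m < m := fun l => Nat.mod_lt _ hm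
    set WW : (Fin q → Bool) → Fin N → Set (OnePoint X) := fun b l =>
      if b ⟨(l:ℕ)/m, hdiv l⟩ then w ⟨(l:ℕ)/m, hdiv l⟩ ⟨(l:ℕ)%m, hmod l⟩ else W₀ with hWW
    set T : (Fin q → Bool) → Set (OnePoint X) :=
      fun b => ⋂ l : Fin N, (onePointExtend f)^[(l:ℕ)]⁻¹' (WW b l) with hT
    refine ⟨Finset.image T Finset.univ, ?_, ?_, ?_⟩
    · intro S hS
      obtain ⟨b, _, rfl⟩ := Finset.mem_image.mp (Finset.mem_coe.mp hS)
      refine ⟨WW b, fun l => ?_, rfl⟩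
      rw [hWW]
      dsimp only
      split
      · exact hw _ _
      · exact hW₀m
    · calc (Finset.image T Finset.univ).card
          ≤ (Finset.univ : Finset (Fin q → Bool)).card := Finset.card_image_le
        _ = 2^q := by simp
    · intro p hp'
      rcases Set.mem_insert_iff.mp hp' with rfl | ⟨x, hxB, rfl⟩
      · refine ⟨T (fun _ => false), ?_, ?_⟩
        · exact Finset.mem_coe.mpr (Finset.mem_image_of_mem _ (Finset.mem_univ _))
        · rw [hT]
          refine Set.mem_iInter.mpr fun l => ?_
          rw [Set.mem_preimage, auxOPE_iter_infty, hWW]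
          dsimp only
          rw [if_neg (by simp)]
          exact hW₀
      · set b : Fin q → Bool := fun i =>
          decide (OnePoint.some ((f^[m])^[(i:ℕ)] x) ∈ C i) with hb
        refine ⟨T b, Finset.mem_coe.mpr (Finset.mem_image_of_mem _ (Finset.mem_univ _)), ?_⟩
        rw [hT]
        refine Set.mem_iInter.mpr fun l => ?_
        rw [Set.mem_preimage, auxOPE_iter_coe]
        have hiter : f^[(l:ℕ)] x = f^[(l:ℕ)%m] (f^[m*((l:ℕ)/m)] x) := by
          rw [← Function.iterate_add_apply]
          congr 1
          exact (Nat.mod_add_div (l:ℕ) m).symm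
        have hym : f^[m*((l:ℕ)/m)] x = (f^[m])^[(l:ℕ)/m] x := by
          rw [Function.iterate_mul]
        have hxui : (f^[m])^[(l:ℕ)/m] x ∈ u ⟨(l:ℕ)/m, hdiv l⟩ := by
          have h' := Set.mem_iInter.mp hxB ⟨(l:ℕ)/m, hdiv l⟩
          exact h'
        rw [← hCeq ⟨(l:ℕ)/m, hdiv l⟩] at hxui
        rw [Set.mem_preimage] at hxui
        rw [hWW]
        dsimp only
        by_cases hcase : OnePoint.some ((f^[m])^[((⟨(l:ℕ)/m, hdiv l⟩ : Fin q) : ℕ)] x)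
            ∈ C ⟨(l:ℕ)/m, hdiv l⟩
        · rw [if_pos (by rw [hb]; simpa using hcase)]
          have hcase' := hcase
          rw [hweq ⟨(l:ℕ)/m, hdiv l⟩] at hcase'
          have h2 := Set.mem_iInter.mp hcase' ⟨(l:ℕ)%m, hmod l⟩
          rw [Set.mem_preimage] at h2
          rw [hiter, hym, ← auxOPE_iter_coe]
          exact h2
        · rw [if_neg (by rw [hb]; simpa using hcase)]
          have hC0 : OnePoint.some ((f^[m])^[(l:ℕ)/m] x) ∈ C₀ := by
            rcases hxui with h' | h'
            · exact absurd h' hcase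
            · exact h'
          rw [hC₀] at hC0
          have h2 := Set.mem_iInter.mp hC0 ⟨(l:ℕ)%m, hmod l⟩
          rw [Set.mem_preimage] at h2
          rw [hiter, hym, ← auxOPE_iter_coe]
          exact h2
  have hD : Filter.atTop.limsup
      (fun q : ℕ => ENNReal.ofReal (Real.log (coverN (iterJoin (f^[m]) 𝒰 q))) / q)
      ≤ (m:ℝ≥0∞) * cEnt f := by
    refine le_trans (aux_cEntCover_pow_le hf hp h𝒰cc hm) (mul_le_mul_right ?_ (m:ℝ≥0∞))
    exact le_iSup₂_of_le 𝒰 h𝒰cc le_rfl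
  exact aux_assembly hm _ _ hkey hD (ENNReal.mul_ne_top (ENNReal.natCast_ne_top m) hc)

end AuxMain2
section AuxFinal

open OnePoint

variable {X : Type*}

lemma aux_cEnt_ge [TopologicalSpace X] [Nonempty X] {f : X → X}
    (hf : Continuous f) (hp : ∀ K : Set X, IsCompact K → IsCompact (f ⁻¹' K)) :
    cEnt (onePointExtend f) ≤ cEnt f := by
  rcases eq_or_ne (cEnt f) ⊤ with htop | htop
  · rw [htop]; exact le_top
  refine iSup₂_le fun 𝒲 h𝒲 => ?_
  obtain ⟨W₀, hW₀m, hW₀⟩ : ∃ W ∈ 𝒲, (∞ : OnePoint X) ∈ W := by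
    have hx : (∞ : OnePoint X) ∈ ⋃₀ 𝒲 := by rw [h𝒲.2]; trivial
    obtain ⟨W, hW, hi⟩ := hx
    exact ⟨W, hW, hi⟩
  apply ENNReal.le_of_forall_pos_le_add
  intro ε hε _
  have hε0 : (ε : ℝ≥0∞) ≠ 0 := by exact_mod_cast hε.ne'
  obtain ⟨m₀, hm₀⟩ := ENNReal.exists_nat_gt
    (ENNReal.div_lt_top ENNReal.ofReal_ne_top hε0).ne
  set m : ℕ := m₀ + 1 with hmdef
  have hm : 0 < m := Nat.succ_pos _
  have hm0 : (m:ℝ≥0∞) ≠ 0 := Nat.cast_ne_zero.mpr hm.ne'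
  have hmt : (m:ℝ≥0∞) ≠ ⊤ := ENNReal.natCast_ne_top m
  have hstep := aux_main_estimate hf hp h𝒲 hW₀m hW₀ hm htop
  refine hstep.trans ?_
  have h1 : (ENNReal.ofReal (Real.log 2) + (m:ℝ≥0∞) * cEnt f)/(m:ℝ≥0∞)
      = ENNReal.ofReal (Real.log 2)/m + cEnt f := by
    rw [ENNReal.add_div, mul_comm (m:ℝ≥0∞) (cEnt f), mul_div_assoc,
      ENNReal.div_self hm0 hmt, mul_one]
  rw [h1]
  have h2 : ENNReal.ofReal (Real.log 2) ≤ (ε:ℝ≥0∞) * m := by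
    calc ENNReal.ofReal (Real.log 2)
        = ENNReal.ofReal (Real.log 2) / (ε:ℝ≥0∞) * ε :=
          (ENNReal.div_mul_cancel hε0 ENNReal.coe_ne_top).symm
      _ ≤ (m₀:ℝ≥0∞) * ε := mul_le_mul_left hm₀.le _
      _ ≤ (m:ℝ≥0∞) * ε := mul_le_mul_left (by exact_mod_cast Nat.le_succ m₀) _
      _ = (ε:ℝ≥0∞) * m := mul_comm _ _
  have h3 : ENNReal.ofReal (Real.log 2)/(m:ℝ≥0∞) ≤ (ε:ℝ≥0∞) := ENNReal.div_le_of_le_mul h2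
  calc ENNReal.ofReal (Real.log 2)/(m:ℝ≥0∞) + cEnt f ≤ (ε:ℝ≥0∞) + cEnt f :=
        add_le_add_left h3 _
    _ = cEnt f + ε := add_comm _ _

lemma aux_cEnt_le [TopologicalSpace X] [Nonempty X] (f : X → X) :
    cEnt f ≤ cEnt (onePointExtend f) := by
  refine iSup₂_le fun 𝒰 h𝒰 => ?_
  rw [← aux_cEntCover_tset f 𝒰]
  exact le_iSup₂_of_le (auxTset '' 𝒰) (aux_isCoCompactCover_tset h𝒰) le_rfl

lemma aux_cEnt_empty [TopologicalSpace X] [IsEmpty X] (f : X → X) : cEnt f = 0 := by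
  refine le_antisymm (iSup₂_le fun 𝒰 h𝒰 => ?_) zero_le
  have hz : ∀ n : ℕ, covH (iterJoin f 𝒰 n) = 0 := by
    intro n
    have hc0 : coverN (iterJoin f 𝒰 n) = 0 := by
      refine Nat.le_zero.mp ?_
      have h := aux_coverN_le_card (𝒰 := iterJoin f 𝒰 n) (V := (∅ : Finset (Set X)))
        (by simp) (by
          simp only [Finset.coe_empty, Set.sUnion_empty]
          exact (Set.univ_eq_empty_iff.mpr ‹IsEmpty X›).symm)
      simpa using h
    rw [covH, hc0]
    simp
  have heq : (fun n : ℕ => covH (iterJoin f 𝒰 n) / (n:ℝ≥0∞)) = fun _ : ℕ => (0:ℝ≥0∞) :=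
    funext fun n => by rw [hz n]; simp
  have : cEntCover f 𝒰 = 0 := by
    unfold cEntCover
    rw [heq, Filter.limsup_const]
  exact le_of_eq this

lemma aux_cEnt_onePoint_empty [TopologicalSpace X] [IsEmpty X] (f : X → X) :
    cEnt (onePointExtend f) = 0 := by
  refine le_antisymm (iSup₂_le fun 𝒲 h𝒲 => ?_) zero_le
  obtain ⟨W₀, hW₀m, hW₀⟩ : ∃ W ∈ 𝒲, (∞ : OnePoint X) ∈ W := by
    have hx : (∞ : OnePoint X) ∈ ⋃₀ 𝒲 := by rw [h𝒲.2]; trivial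
    obtain ⟨W, hW, hi⟩ := hx
    exact ⟨W, hW, hi⟩
  have hc1 : ∀ n : ℕ, coverN (iterJoin (onePointExtend f) 𝒲 n) ≤ 1 := by
    intro n
    have h := aux_coverN_le_card
      (𝒰 := iterJoin (onePointExtend f) 𝒲 n)
      (V := ({⋂ i : Fin n, (onePointExtend f)^[(i:ℕ)]⁻¹' W₀} : Finset (Set (OnePoint X))))
      (by
        intro A hA
        rw [Finset.coe_singleton, Set.mem_singleton_iff] at hA
        subst hA
        exact ⟨fun _ => W₀, fun _ => hW₀m, rfl⟩)
      (by
        rw [Set.eq_univ_iff_forall]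
        intro p
        refine ⟨⋂ i : Fin n, (onePointExtend f)^[(i:ℕ)]⁻¹' W₀, by simp, ?_⟩
        induction p using OnePoint.rec with
        | infty =>
            refine Set.mem_iInter.mpr fun i => ?_
            rw [Set.mem_preimage, auxOPE_iter_infty]
            exact hW₀
        | coe x => exact isEmptyElim x)
    simpa using h
  have hz : ∀ n : ℕ, covH (iterJoin (onePointExtend f) 𝒲 n) = 0 := by
    intro n
    rw [covH]
    rcases Nat.le_one_iff_eq_zero_or_eq_one.mp (hc1 n) with h | h <;> rw [h] <;> simp
  have heq : (fun n : ℕ => covH (iterJoin (onePointExtend f) 𝒲 n) / (n:ℝ≥0∞))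
      = fun _ : ℕ => (0:ℝ≥0∞) := funext fun n => by rw [hz n]; simp
  have : cEntCover (onePointExtend f) 𝒲 = 0 := by
    unfold cEntCover
    rw [heq, Filter.limsup_const]
  exact le_of_eq this

end AuxFinal
/-- Let `d` be a compact-type metric on the locally compact separable metric space
`X`, with extension `d̃` to the one-point compactification, and let `f̃` be the extension of the
perfect map `f` fixing the point at infinity. Then `h^d(f) = h^{d̃}(f̃)` and `c(f) = c(f̃)`. -/
theorem dEnt_eq_dEnt_onePoint {X : Type*} [MetricSpace X] [LocallyCompactSpace X]
    [TopologicalSpace.SeparableSpace X]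
    (f : X → X) (hf : IsPerfectMap f)
    (m : MetricSpace (OnePoint X))
    (hm : m.toUniformSpace.toTopologicalSpace = (inferInstance : TopologicalSpace (OnePoint X)))
    (hext : ∀ x y : X, m.dist ↑x ↑y = dist x y) :
    dEnt dist f = dEnt m.dist (onePointExtend f) ∧ cEnt f = cEnt (onePointExtend f) := by
  have hcont : Continuous f := hf.1
  have hproper : ∀ K : Set X, IsCompact K → IsCompact (f ⁻¹' K) := fun K hK =>
    ((isProperMap_iff_isClosedMap_and_compact_fibers.mpr ⟨hf.1, hf.2.1, hf.2.2⟩).isCompact_preimage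
      hK)
  constructor
  · exact aux_dEnt_eq m.dist dist hext f
  · rcases isEmpty_or_nonempty X with hE | hNE
    · rw [aux_cEnt_empty f, aux_cEnt_onePoint_empty f]
    · exact le_antisymm (aux_cEnt_le f) (aux_cEnt_ge hcont hproper)
end
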